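/- arXiv:1103.3458 — 11 statements merged into one kernel-verified Lean document; each statement's English description precedes it below -/
import Mathlib

section
/- Let π be a flow on a locally compact metric space X and let N ∈ 𝓕. If T > 0 is such that Γ^T(N) = ∅, then A⁺(G^T(N)) = G^T(N), i.e. G^T(N) is positively invariant. -/
open Set Metric Filter Topology

/-- A (global) flow on a metric space: jointly continuous, identity at time `0`,
and `zρ(s+t) = (zρt)ρs` for all `s t : ℝ`. -/
def IsFlow {Z : Type*} [MetricSpace Z] (ρ : ℝ → Z → Z) : Prop :=
  Continuous (fun p : ℝ × Z => ρ p.1 p.2) ∧ (∀ z, ρ 0 z = z) ∧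
    ∀ (s t : ℝ) (z : Z), ρ (s + t) z = ρ s (ρ t z)

/-- `G^T_ρ(Y) = {z : zρt ∈ cl Y for all t ∈ [−T,T]}`. -/
def Gset {Z : Type*} [MetricSpace Z] (ρ : ℝ → Z → Z) (T : ℝ) (Y : Set Z) : Set Z :=
  {z | ∀ t ∈ Set.Icc (-T) T, ρ t z ∈ closure Y}

/-- `Γ^T_ρ(Y) = {z ∈ G^T_ρ(Y) : zρt ∈ ∂Y for some t ∈ [0,T]}`. -/
def GammaSet {Z : Type*} [MetricSpace Z] (ρ : ℝ → Z → Z) (T : ℝ) (Y : Set Z) : Set Z :=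
  {z ∈ Gset ρ T Y | ∃ t ∈ Set.Icc (0:ℝ) T, ρ t z ∈ frontier Y}

/-- `A⁺_ρ(Y) = {z ∈ Y : zρt ∈ Y for all t ≥ 0}`. -/
def Aplus {Z : Type*} [MetricSpace Z] (ρ : ℝ → Z → Z) (Y : Set Z) : Set Z :=
  {z ∈ Y | ∀ t : ℝ, 0 ≤ t → ρ t z ∈ Y}

/-- `A⁻_ρ(Y) = {z ∈ Y : zρ(−t) ∈ Y for all t ≥ 0}`. -/
def Aminus {Z : Type*} [MetricSpace Z] (ρ : ℝ → Z → Z) (Y : Set Z) : Set Z :=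
  {z ∈ Y | ∀ t : ℝ, 0 ≤ t → ρ (-t) z ∈ Y}

/-- `A_ρ(Y) = A⁺_ρ(Y) ∩ A⁻_ρ(Y)`. -/
def Ainv {Z : Type*} [MetricSpace Z] (ρ : ℝ → Z → Z) (Y : Set Z) : Set Z :=
  Aplus ρ Y ∩ Aminus ρ Y

/-- The family `𝓕` of sets `N` with nonempty interior such that `G^T(N) ⊆ int N`
for some `T > 0`. -/
def calF {Z : Type*} [MetricSpace Z] (ρ : ℝ → Z → Z) : Set (Set Z) :=
  {N | (interior N).Nonempty ∧ ∃ T > 0, Gset ρ T N ⊆ interior N}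

/-- The product flow of `π₀` on `ℝ × X`: `(s,x)πt = (s+t, xπ₀t)`. -/
def prodFlow {X : Type*} [MetricSpace X] (π₀ : ℝ → X → X) : ℝ → ℝ × X → ℝ × X :=
  fun t p => (p.1 + t, π₀ t p.2)

/-- A flow on `ℝ × X` is a skew product flow if `P₁((s,x)πt) = s + t`. -/
def IsSkewFlow {X : Type*} [MetricSpace X] (σ : ℝ → ℝ × X → ℝ × X) : Prop :=
  ∀ (t s : ℝ) (x : X), (σ t (s, x)).1 = s + t

/-- Semi-singular convergence of a sequence of flows on `ℝ × X` to a flow on `X`: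
for every sequence `(s_n)` in `ℝ` and all sequences `x_n → x₀`, `t_n → t₀ ∈ [0,∞)`,
`P₂((s_n,x_n) π_n t_n) → x₀ π₀ t₀`. -/
def SemiSingConv {X : Type*} [MetricSpace X]
    (πn : ℕ → ℝ → ℝ × X → ℝ × X) (π₀ : ℝ → X → X) : Prop :=
  ∀ (s : ℕ → ℝ) (x : ℕ → X) (x₀ : X) (t : ℕ → ℝ) (t₀ : ℝ),
    Filter.Tendsto x Filter.atTop (nhds x₀) → (∀ n, 0 ≤ t n) →
    Filter.Tendsto t Filter.atTop (nhds t₀) →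
    Filter.Tendsto (fun n => (πn n (t n) (s n, x n)).2) Filter.atTop (nhds (π₀ t₀ x₀))

/-- `B` is a stable isolating block for the flow `ρ`: a closed isolating neighborhood
which is positively invariant and such that each boundary point immediately leaves `B`
in backward time and immediately enters `int B` in forward time. -/
def IsStableIsolatingBlock {Z : Type*} [MetricSpace Z] (ρ : ℝ → Z → Z) (B : Set Z) : Prop :=
  IsClosed B ∧ Ainv ρ B ⊆ interior B ∧ Aplus ρ B = B ∧
    ∀ z ∈ frontier B, ∃ ε > 0, ∀ t ∈ Set.Ioo (0:ℝ) ε, ρ (-t) z ∉ B ∧ ρ t z ∈ interior B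

/-- If `N ∈ 𝓕` and `T > 0` is such that `Γ^T(N) = ∅`, then `G^T(N)` is positively
invariant: `A⁺(G^T(N)) = G^T(N)`. -/
theorem stmt3 {X : Type*} [MetricSpace X] [LocallyCompactSpace X]
    (π : ℝ → X → X) (hπ : IsFlow π) (N : Set X) (hN : N ∈ calF π)
    (T : ℝ) (hT : 0 < T) (hΓ : GammaSet π T N = ∅) :
    Aplus π (Gset π T N) = Gset π T N := by
  obtain ⟨hcont, hzero, hadd⟩ := hπ
  have hΓ' : ∀ z ∈ Gset π T N, ∀ t ∈ Set.Icc (0:ℝ) T, π t z ∉ frontier N := by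
    intro z hz t ht hfr
    have : z ∈ GammaSet π T N := ⟨hz, t, ht, hfr⟩
    rw [hΓ] at this; exact this
  ext x
  simp only [Aplus, Set.mem_setOf_eq]
  constructor
  · rintro ⟨hx, -⟩; exact hx
  · intro hx
    have hcx : Continuous fun t => π t x :=
      hcont.comp (continuous_id.prodMk continuous_const)
    -- the set of times at which the orbit of x is in closure N
    set C : Set ℝ := {t | π t x ∈ closure N} with hCdef
    have hCclosed : IsClosed C := isClosed_closure.preimage hcx
    have h0 : Set.Icc (-T) T ⊆ C := fun u hu => hx u hu
    -- key claim: the orbit stays in closure N on [-T, T+s] for all s ≥ 0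
    have key : ∀ s : ℝ, 0 ≤ s → Set.Icc (-T) (T + s) ⊆ C := by
      by_contra h
      push_neg at h
      obtain ⟨r, hr0, hrnot⟩ := h
      set F : Set ℝ := {s | 0 ≤ s ∧ ¬ Set.Icc (-T) (T + s) ⊆ C} with hFdef
      have hFne : F.Nonempty := ⟨r, hr0, hrnot⟩
      have hFbdd : BddBelow F := ⟨0, fun s hs => hs.1⟩
      set s₀ : ℝ := sInf F with hs₀def
      have hs₀0 : 0 ≤ s₀ := le_csInf hFne fun s hs => hs.1
      -- all s in [0, s₀) satisfy Icc (-T) (T+s) ⊆ C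
      have hbelow : ∀ s, 0 ≤ s → s < s₀ → Set.Icc (-T) (T + s) ⊆ C := by
        intro s hs hss
        by_contra hc
        exact absurd (csInf_le hFbdd ⟨hs, hc⟩) (not_le_of_gt hss)
      -- s₀ itself satisfies it
      have hs₀D : Set.Icc (-T) (T + s₀) ⊆ C := by
        rcases eq_or_lt_of_le hs₀0 with heq | hlt
        · rw [← heq, add_zero]; exact h0
        · have hI : Set.Ico (-T) (T + s₀) ⊆ C := by
            intro u hu
            rcases le_or_gt u T with h1 | h2
            · exact h0 ⟨hu.1, h1⟩
            · have hs : 0 ≤ u - T := le_of_lt (sub_pos.mpr h2)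
              have : u - T < s₀ := by linarith [hu.2]
              exact hbelow (u - T) hs this ⟨hu.1, by linarith⟩
          have hlt' : -T < T + s₀ := by linarith
          have : Set.Icc (-T) (T + s₀) = closure (Set.Ico (-T) (T + s₀)) :=
            (closure_Ico (ne_of_lt hlt')).symm
          rw [this]
          exact hCclosed.closure_subset_iff.mpr hI
      -- π s₀ x ∈ Gset
      have hyG : π s₀ x ∈ Gset π T N := by
        intro u hu
        rw [← hadd u s₀ x]
        exact hs₀D ⟨by linarith [hu.1, hs₀0], by linarith [hu.2]⟩
      -- hence π (T + s₀) x ∈ interior N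
      have hint : π (T + s₀) x ∈ interior N := by
        have hmem : π (T + s₀) x ∈ closure N := hs₀D ⟨by linarith, le_refl _⟩
        have hnf : π (T + s₀) x ∉ frontier N := by
          have := hΓ' (π s₀ x) hyG T ⟨le_of_lt hT, le_refl T⟩
          rwa [← hadd T s₀ x] at this
        rw [frontier, Set.mem_diff, not_and, not_not] at hnf
        exact hnf hmem
      -- openness: a whole interval beyond T + s₀ lies in C
      obtain ⟨ε, hε, hball⟩ := Metric.isOpen_iff.mp (isOpen_interior.preimage hcx)
        (T + s₀) hint
      have hcontr : s₀ + ε / 2 ≤ sInf F := by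
        apply le_csInf hFne
        intro s hs
        by_contra hlt
        push_neg at hlt
        apply hs.2
        intro u hu
        rcases le_or_gt u (T + s₀) with h1 | h2
        · exact hs₀D ⟨hu.1, h1⟩
        · have : u ∈ Metric.ball (T + s₀) ε := by
            rw [Metric.mem_ball, Real.dist_eq, abs_of_pos (by linarith)]
            have := hu.2
            linarith
          have : π u x ∈ interior N := hball this
          exact subset_closure (interior_subset this)
      have : 0 < ε / 2 := by linarith
      linarith [hcontr, hs₀def ▸ le_refl s₀]
    -- conclude
    refine ⟨hx, fun t ht => ?_⟩
    intro u hu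
    rw [← hadd u t x]
    exact key t ht ⟨by linarith [hu.1], by linarith [hu.2]⟩
end

section
/- Let π be a flow on a locally compact metric space X and let N ⊆ X be a compact isolating neighborhood such that A⁻(N) = A(N) = K ≠ ∅. Then there exists a closed set B with K ⊆ int B and B ⊆ int N such that A(B) = K, A⁺(B) = B, and for every x ∈ ∂B there is ε > 0 such that for all t ∈ (0,ε): xπ(−t) ∉ B and xπt ∈ int B. Such a B is called a stable isolating block. -/
open Set Metric Filter Topology

section Blocks
variable {X : Type*} [MetricSpace X] {π : ℝ → X → X}

lemma IsFlow.cont_x (hπ : IsFlow π) (t : ℝ) : Continuous fun x => π t x :=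
  hπ.1.comp (continuous_const.prodMk continuous_id)

lemma IsFlow.cont_t (hπ : IsFlow π) (x : X) : Continuous fun t => π t x :=
  hπ.1.comp (continuous_id.prodMk continuous_const)

lemma IsFlow.addf (hπ : IsFlow π) (s t : ℝ) (x : X) : π (s + t) x = π s (π t x) := hπ.2.2 s t x

lemma IsFlow.cancel (hπ : IsFlow π) (t : ℝ) (x : X) : π (-t) (π t x) = x := by
  rw [← hπ.addf]; simp [hπ.2.1]

/-- Core compactness argument: a sequence flowing longer and longer inside the
compact set `C` while being `ε`-far from `K` at the final time yields a point of
`K` at distance `≥ ε` from `K`, a contradiction. -/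
lemma core (hπ : IsFlow π) {K C : Set X}
    (hC : IsCompact C)
    (hCK : ∀ z ∈ C, (∀ s : ℝ, 0 ≤ s → π (-s) z ∈ C) → z ∈ K)
    (w : ℕ → X) (u : ℕ → ℝ) (hu0 : ∀ n, 0 ≤ u n) (hu : Tendsto u atTop atTop)
    (horb : ∀ n, ∀ t, 0 ≤ t → t ≤ u n → π t (w n) ∈ C)
    {ε : ℝ} (hε : 0 < ε) (hfar : ∀ n, ε ≤ infDist (π (u n) (w n)) K) : False := by
  set y : ℕ → X := fun n => π (u n) (w n) with hy
  have hyC : ∀ n, y n ∈ C := fun n => horb n (u n) (hu0 n) le_rfl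
  obtain ⟨z, hzC, φ, hφ, hconv⟩ := hC.tendsto_subseq hyC
  have hzfar : ε ≤ infDist z K := by
    have h1 : Tendsto (fun n => infDist (y (φ n)) K) atTop (𝓝 (infDist z K)) :=
      ((continuous_infDist_pt K).continuousAt.tendsto).comp hconv
    exact le_of_tendsto_of_tendsto' tendsto_const_nhds h1 (fun n => hfar (φ n))
  have hzK : z ∈ K := by
    apply hCK z hzC
    intro s hs
    have hlim : Tendsto (fun n => π (-s) (y (φ n))) atTop (𝓝 (π (-s) z)) :=
      ((hπ.cont_x (-s)).continuousAt.tendsto).comp hconv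
    have hev : ∀ᶠ n in atTop, π (-s) (y (φ n)) ∈ C := by
      have : ∀ᶠ n in atTop, s ≤ u (φ n) :=
        (hu.comp hφ.tendsto_atTop).eventually_ge_atTop s
      filter_upwards [this] with n hn
      have : π (-s) (y (φ n)) = π (u (φ n) - s) (w (φ n)) := by
        rw [hy]; rw [← hπ.addf]; ring_nf
      rw [this]
      exact horb (φ n) _ (by linarith) (by linarith)
    exact hC.isClosed.mem_of_tendsto hlim hev
  have : infDist z K = 0 := infDist_zero_of_mem hzK
  linarith


lemma IsFlow.tube (hπ : IsFlow π) (x : X) (T θ : ℝ) (hθ : 0 < θ) :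
    ∀ᶠ y in 𝓝 x, ∀ t ∈ Icc (0:ℝ) T, dist (π t y) (π t x) < θ := by
  rcases isEmpty_or_nonempty (Icc (0:ℝ) T) with hE | hE
  · filter_upwards with y t ht
    exact absurd ht (by
      rw [Set.isEmpty_coe_sort, Set.eq_empty_iff_forall_notMem] at hE
      exact hE t)
  · haveI : CompactSpace (Icc (0:ℝ) T) := isCompact_iff_compactSpace.mp isCompact_Icc
    set F : X → C(Icc (0:ℝ) T, X) := fun y =>
      ⟨fun t => π t.1 y, (hπ.cont_t y).comp continuous_subtype_val⟩ with hF
    have hFc : Continuous F := by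
      apply ContinuousMap.continuous_of_continuous_uncurry
      exact hπ.1.comp ((continuous_subtype_val.comp continuous_snd).prodMk continuous_fst)
    have h := Metric.tendsto_nhds.1 (hFc.continuousAt (x := x)) θ hθ
    filter_upwards [h] with y hy t ht
    exact (ContinuousMap.dist_lt_iff hθ).1 hy ⟨t, ht⟩

/-- weight function facts -/
lemma wgt0 {t : ℝ} (ht : 0 ≤ t) : 0 < (1+t)/(2+t) := by positivity

lemma wle1 {t : ℝ} (ht : 0 ≤ t) : (1+t)/(2+t) ≤ 1 := by
  rw [div_le_one (by linarith)]; linarith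

lemma whalf {t : ℝ} (ht : 0 ≤ t) : 1/2 ≤ (1+t)/(2+t) := by
  rw [div_le_div_iff₀ (by norm_num) (by linarith)]; linarith

lemma wmono {a b : ℝ} (ha : 0 ≤ a) (hab : a < b) : (1+a)/(2+a) < (1+b)/(2+b) := by
  rw [div_lt_div_iff₀ (by linarith) (by linarith)]; nlinarith

lemma wmono' {a b : ℝ} (ha : 0 ≤ a) (hab : a ≤ b) : (1+a)/(2+a) ≤ (1+b)/(2+b) := by
  rcases eq_or_lt_of_le hab with h | h
  · subst h; exact le_rfl
  · exact (wmono ha h).le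

/-- the integrand of the Lyapunov function -/
noncomputable def tmf (π : ℝ → X → X) (K : Set X) (ε₀ : ℝ) (x : X) (t : ℝ) : ℝ :=
  min (infDist (π t x) K) ε₀ * ((1+t)/(2+t))

/-- the Lyapunov function -/
noncomputable def Vf (π : ℝ → X → X) (K : Set X) (ε₀ : ℝ) (x : X) : ℝ :=
  sSup (tmf π K ε₀ x '' Ici 0)

variable {K : Set X} {ε₀ : ℝ}

lemma tmf_nonneg (hε₀ : 0 < ε₀) {x : X} {t : ℝ} (ht : 0 ≤ t) : 0 ≤ tmf π K ε₀ x t :=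
  mul_nonneg (le_min infDist_nonneg hε₀.le) (wgt0 ht).le

lemma tmf_le (hε₀ : 0 < ε₀) {x : X} {t : ℝ} (ht : 0 ≤ t) : tmf π K ε₀ x t ≤ ε₀ := by
  calc tmf π K ε₀ x t ≤ min (infDist (π t x) K) ε₀ * 1 :=
        mul_le_mul_of_nonneg_left (wle1 ht) (le_min infDist_nonneg hε₀.le)
    _ = min (infDist (π t x) K) ε₀ := mul_one _
    _ ≤ ε₀ := min_le_right _ _

lemma tmf_bdd (hε₀ : 0 < ε₀) (x : X) : BddAbove (tmf π K ε₀ x '' Ici 0) := by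
  refine ⟨ε₀, ?_⟩
  rintro _ ⟨t, ht, rfl⟩
  exact tmf_le hε₀ ht

lemma tmf_ne (x : X) : (tmf π K ε₀ x '' Ici 0).Nonempty :=
  ⟨tmf π K ε₀ x 0, mem_image_of_mem _ (mem_Ici.mpr le_rfl)⟩

lemma tmf_le_Vf (hε₀ : 0 < ε₀) {x : X} {t : ℝ} (ht : 0 ≤ t) : tmf π K ε₀ x t ≤ Vf π K ε₀ x :=
  le_csSup (tmf_bdd hε₀ x) (mem_image_of_mem _ ht)

lemma Vf_le (hε₀ : 0 < ε₀) {x : X} {b : ℝ} (h : ∀ t, 0 ≤ t → tmf π K ε₀ x t ≤ b) :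
    Vf π K ε₀ x ≤ b :=
  csSup_le (tmf_ne x) (by rintro _ ⟨t, ht, rfl⟩; exact h t ht)

lemma Vf_nonneg (hε₀ : 0 < ε₀) (x : X) : 0 ≤ Vf π K ε₀ x :=
  le_trans (tmf_nonneg hε₀ le_rfl) (tmf_le_Vf hε₀ le_rfl)

lemma Vf_le_eps (hε₀ : 0 < ε₀) (x : X) : Vf π K ε₀ x ≤ ε₀ :=
  Vf_le hε₀ (fun t ht => tmf_le hε₀ ht)

/-- points with small `Vf` are near `K` -/
lemma near_of_Vf (hπ : IsFlow π) (hε₀ : 0 < ε₀) {x : X} :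
    min (infDist x K) ε₀ ≤ 2 * Vf π K ε₀ x := by
  have h0 := tmf_le_Vf (π := π) (K := K) hε₀ (x := x) (t := 0) le_rfl
  have : tmf π K ε₀ x 0 = min (infDist x K) ε₀ * (1/2) := by
    unfold tmf; rw [hπ.2.1]; norm_num
  rw [this] at h0; linarith

lemma Vf_decrease (hπ : IsFlow π) (hε₀ : 0 < ε₀) (x : X) {s : ℝ} (hs : 0 ≤ s) :
    Vf π K ε₀ (π s x) ≤ Vf π K ε₀ x := by
  apply Vf_le hε₀
  intro t ht
  have hflow : π t (π s x) = π (t + s) x := (hπ.addf t s x).symm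
  have h1 : tmf π K ε₀ (π s x) t = min (infDist (π (t+s) x) K) ε₀ * ((1+t)/(2+t)) := by
    unfold tmf; rw [hflow]
  calc tmf π K ε₀ (π s x) t
      = min (infDist (π (t+s) x) K) ε₀ * ((1+t)/(2+t)) := h1
    _ ≤ min (infDist (π (t+s) x) K) ε₀ * ((1+(t+s))/(2+(t+s))) :=
        mul_le_mul_of_nonneg_left (wmono' ht (by linarith)) (le_min infDist_nonneg hε₀.le)
    _ = tmf π K ε₀ x (t+s) := rfl
    _ ≤ Vf π K ε₀ x := tmf_le_Vf hε₀ (by linarith)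

lemma Vf_strict_decrease (hπ : IsFlow π) (hε₀ : 0 < ε₀) (x : X)
    (hattr : ∀ η, 0 < η → ∃ T, 0 ≤ T ∧ ∀ u, T ≤ u → infDist (π u x) K < η)
    {s : ℝ} (hs : 0 < s) (hV : 0 < Vf π K ε₀ x) :
    Vf π K ε₀ (π s x) < Vf π K ε₀ x := by
  set S := Vf π K ε₀ (π s x) with hSdef
  rcases le_or_gt S 0 with hS | hS
  · exact lt_of_le_of_lt hS hV
  obtain ⟨R, hR0, hRsm⟩ := hattr (S/2) (by linarith)
  set g : ℝ → ℝ := fun t => tmf π K ε₀ (π s x) t with hg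
  have hgrw : ∀ t : ℝ, g t = min (infDist (π (t+s) x) K) ε₀ * ((1+t)/(2+t)) := by
    intro t; show tmf π K ε₀ (π s x) t = _
    unfold tmf; rw [show π t (π s x) = π (t + s) x from (hπ.addf t s x).symm]
  have hgcont : ContinuousOn g (Icc 0 R) := by
    apply ContinuousOn.mul
    · exact (((continuous_infDist_pt K).comp (hπ.cont_t (π s x))).min continuous_const).continuousOn
    · apply ContinuousOn.div (by fun_prop) (by fun_prop)
      intro t ht; have := ht.1; intro h; linarith [h]
  obtain ⟨t₀, ht₀mem, hmax⟩ := isCompact_Icc.exists_isMaxOn ⟨0, le_rfl, hR0⟩ hgcont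
  have hub : ∀ t, 0 ≤ t → g t ≤ max (g t₀) (S/2) := by
    intro t ht
    rcases le_or_gt t R with hR | hR
    · exact le_max_of_le_left (hmax ⟨ht, hR⟩)
    · refine le_max_of_le_right ?_
      have h1 : infDist (π (t+s) x) K < S/2 := hRsm (t+s) (by linarith)
      calc g t = min (infDist (π (t+s) x) K) ε₀ * ((1+t)/(2+t)) := hgrw t
        _ ≤ min (infDist (π (t+s) x) K) ε₀ * 1 :=
            mul_le_mul_of_nonneg_left (wle1 ht) (le_min infDist_nonneg hε₀.le)
        _ = min (infDist (π (t+s) x) K) ε₀ := mul_one _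
        _ ≤ infDist (π (t+s) x) K := min_le_left _ _
        _ ≤ S/2 := h1.le
  have hSle : S ≤ max (g t₀) (S/2) := Vf_le hε₀ hub
  have hSg : S ≤ g t₀ := by
    rcases max_cases (g t₀) (S/2) with ⟨h1, _⟩ | ⟨h1, _⟩
    · rwa [h1] at hSle
    · rw [h1] at hSle; linarith
  have ht₀0 : 0 ≤ t₀ := ht₀mem.1
  set m := min (infDist (π (t₀+s) x) K) ε₀ with hm
  have hgt₀ : g t₀ = m * ((1+t₀)/(2+t₀)) := hgrw t₀
  have hmpos : 0 < m := by
    by_contra hmn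
    push_neg at hmn
    have : g t₀ ≤ 0 := by
      rw [hgt₀]
      exact mul_nonpos_of_nonpos_of_nonneg hmn (wgt0 ht₀0).le
    linarith
  have hkey : g t₀ < tmf π K ε₀ x (t₀ + s) := by
    rw [hgt₀]
    unfold tmf
    rw [← hm]
    exact mul_lt_mul_of_pos_left (wmono ht₀0 (by linarith)) hmpos
  calc S ≤ g t₀ := hSg
    _ < tmf π K ε₀ x (t₀+s) := hkey
    _ ≤ Vf π K ε₀ x := tmf_le_Vf hε₀ (by linarith)


lemma stab (hπ : IsFlow π) {K C : Set X} {ε₀ : ℝ} (hε₀ : 0 < ε₀)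
    (hKcl : IsClosed K) (hKne : K.Nonempty)
    (hKinv : ∀ x ∈ K, ∀ t : ℝ, π t x ∈ K)
    (hC : IsCompact C) (hCmem : ∀ x, x ∈ C ↔ infDist x K ≤ ε₀)
    (hCK : ∀ z ∈ C, (∀ s : ℝ, 0 ≤ s → π (-s) z ∈ C) → z ∈ K) :
    ∀ ε : ℝ, 0 < ε → ε ≤ ε₀ → ∃ δ : ℝ, 0 < δ ∧ δ ≤ ε ∧
      ∀ x, infDist x K ≤ δ → ∀ t : ℝ, 0 ≤ t → infDist (π t x) K < ε := by
  by_contra hcon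
  push_neg at hcon
  obtain ⟨ε, hε, hεε₀, hbad⟩ := hcon
  have h' : ∀ n : ℕ, ∃ x, infDist x K ≤ min ε (1/(n+1)) ∧
      ∃ t, 0 ≤ t ∧ ε ≤ infDist (π t x) K := by
    intro n
    have hp : (0:ℝ) < min ε (1/(n+1)) := by positivity
    obtain ⟨x, hx1, t, ht0, ht⟩ := hbad _ hp (min_le_left _ _)
    exact ⟨x, hx1, t, ht0, ht⟩
  choose x hx t ht0 htfar using h'
  -- first exit times
  set S : ℕ → Set ℝ := fun n => {t : ℝ | 0 ≤ t ∧ ε ≤ infDist (π t (x n)) K} with hS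
  have hScl : ∀ n, IsClosed (S n) := by
    intro n
    have : Continuous fun t => infDist (π t (x n)) K :=
      (continuous_infDist_pt K).comp (hπ.cont_t (x n))
    exact (isClosed_Ici.preimage continuous_id).inter (isClosed_Ici.preimage this)
  have hSne : ∀ n, (S n).Nonempty := fun n => ⟨t n, ht0 n, htfar n⟩
  have hSbdd : ∀ n, BddBelow (S n) := fun n => ⟨0, fun a ha => ha.1⟩
  set τ : ℕ → ℝ := fun n => sInf (S n) with hτ
  have hτmem : ∀ n, τ n ∈ S n := fun n => (hScl n).csInf_mem (hSne n) (hSbdd n)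
  have hτ0 : ∀ n, 0 ≤ τ n := fun n => (hτmem n).1
  have hτfar : ∀ n, ε ≤ infDist (π (τ n) (x n)) K := fun n => (hτmem n).2
  have hless : ∀ n, ∀ s, 0 ≤ s → s < τ n → infDist (π s (x n)) K < ε := by
    intro n s hs0 hsτ
    by_contra hge
    push_neg at hge
    exact absurd (csInf_le (hSbdd n) ⟨hs0, hge⟩) (not_le.mpr hsτ)
  have hxn : ∀ n, infDist (x n) K ≤ 1/(n+1) := fun n => (hx n).trans (min_le_right _ _)
  have hxε : ∀ n, infDist (x n) K ≤ ε := fun n => (hx n).trans (min_le_left _ _)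
  -- orbit up to τ n stays with infDist ≤ ε
  have horb : ∀ n, ∀ s, 0 ≤ s → s ≤ τ n → infDist (π s (x n)) K ≤ ε := by
    intro n s hs0 hsτ
    rcases lt_or_eq_of_le hsτ with h | h
    · exact (hless n s hs0 h).le
    · subst h
      rcases eq_or_lt_of_le hs0 with h0 | h0
      · rw [← h0, hπ.2.1]; exact hxε n
      · -- continuity from the left
        have hne' : (𝓝[Set.Ico 0 (τ n)] (τ n)).NeBot := by
          rw [← mem_closure_iff_nhdsWithin_neBot, closure_Ico (ne_of_lt h0)]
          exact ⟨hs0, le_rfl⟩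
        have hcont : Tendsto (fun u => infDist (π u (x n)) K) (𝓝[Set.Ico 0 (τ n)] (τ n))
            (𝓝 (infDist (π (τ n) (x n)) K)) :=
          (((continuous_infDist_pt K).comp (hπ.cont_t (x n))).continuousAt).continuousWithinAt.tendsto
        refine le_of_tendsto hcont ?_
        filter_upwards [self_mem_nhdsWithin] with u hu
        exact (hless n u hu.1 hu.2).le
  have horbC : ∀ n, ∀ s, 0 ≤ s → s ≤ τ n → π s (x n) ∈ C := by
    intro n s hs0 hsτ
    exact (hCmem _).2 ((horb n s hs0 hsτ).trans hεε₀)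
  -- τ n → ∞
  have hτtop : Tendsto τ atTop atTop := by
    by_contra hτc
    rw [Filter.tendsto_atTop] at hτc
    push_neg at hτc
    obtain ⟨M, hM⟩ := hτc
    obtain ⟨φ, hφ, hφM⟩ := extraction_of_frequently_atTop hM
    have hxC : ∀ n, x n ∈ C := fun n => (hCmem _).2 ((hxε n).trans hεε₀)
    have hpair : ∀ n, (τ (φ n), x (φ n)) ∈ Set.Icc (0:ℝ) M ×ˢ C :=
      fun n => ⟨⟨hτ0 _, (hφM n).le⟩, hxC _⟩
    obtain ⟨⟨τ', z⟩, hmem, ψ, hψ, hlim⟩ := (isCompact_Icc.prod hC).tendsto_subseq hpair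
    have hlim1 : Tendsto (fun n => τ (φ (ψ n))) atTop (𝓝 τ') := (continuous_fst.continuousAt.tendsto).comp hlim
    have hlim2 : Tendsto (fun n => x (φ (ψ n))) atTop (𝓝 z) := (continuous_snd.continuousAt.tendsto).comp hlim
    have hzK : z ∈ K := by
      have h1 : Tendsto (fun n => infDist (x (φ (ψ n))) K) atTop (𝓝 (infDist z K)) :=
        ((continuous_infDist_pt K).continuousAt.tendsto).comp hlim2
      have h2 : Tendsto (fun n : ℕ => 1/((φ (ψ n) : ℝ)+1)) atTop (𝓝 0) := by
        apply Tendsto.comp (f := fun n : ℕ => (φ (ψ n) : ℕ)) tendsto_one_div_add_atTop_nhds_zero_nat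
        exact (hφ.comp hψ).tendsto_atTop
      have hle : infDist z K ≤ 0 :=
        le_of_tendsto_of_tendsto' h1 h2 (fun n => by
          have := hxn (φ (ψ n)); push_cast at this ⊢; linarith)
      have : infDist z K = 0 := le_antisymm hle (infDist_nonneg)
      exact (hKcl.mem_iff_infDist_zero hKne).2 this
    have hlim3 : Tendsto (fun n => π (τ (φ (ψ n))) (x (φ (ψ n)))) atTop (𝓝 (π τ' z)) := by
      have := hπ.1.continuousAt (x := (τ', z))
      exact this.tendsto.comp hlim
    have hfar' : ε ≤ infDist (π τ' z) K := by
      have h1 : Tendsto (fun n => infDist (π (τ (φ (ψ n))) (x (φ (ψ n)))) K) atTop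
          (𝓝 (infDist (π τ' z) K)) := ((continuous_infDist_pt K).continuousAt.tendsto).comp hlim3
      exact le_of_tendsto_of_tendsto' tendsto_const_nhds h1 (fun n => hτfar _)
    have : infDist (π τ' z) K = 0 := infDist_zero_of_mem (hKinv z hzK τ')
    linarith
  exact core hπ hC hCK x τ hτ0 hτtop horbC hε hτfar


lemma attrlem (hπ : IsFlow π) {K C : Set X} {ε₀ δ₁ : ℝ}
    (hC : IsCompact C) (hCmem : ∀ x, x ∈ C ↔ infDist x K ≤ ε₀)
    (hCK : ∀ z ∈ C, (∀ s : ℝ, 0 ≤ s → π (-s) z ∈ C) → z ∈ K)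
    (hδ₁ : ∀ x, infDist x K ≤ δ₁ → ∀ t : ℝ, 0 ≤ t → infDist (π t x) K < ε₀) :
    ∀ x, infDist x K ≤ δ₁ → ∀ η : ℝ, 0 < η → ∃ T, 0 ≤ T ∧ infDist (π T x) K < η := by
  intro x hx η hη
  by_contra hcon
  push_neg at hcon
  refine core hπ hC hCK (fun _ => x) (fun n => (n:ℝ)) (fun n => Nat.cast_nonneg n)
    tendsto_natCast_atTop_atTop ?_ hη ?_
  · intro n t ht0 htn
    exact (hCmem _).2 (hδ₁ x hx t ht0).le
  · intro n
    exact hcon (n:ℝ) (Nat.cast_nonneg n)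

end Blocks

/-- Existence of stable isolating blocks: if `N` is a compact isolating neighborhood with
`A⁻(N) = A(N) = K ≠ ∅`, then there is a stable isolating block `B ⊆ int N` for `K`. -/
theorem stmt4 {X : Type*} [MetricSpace X] [LocallyCompactSpace X]
    (π : ℝ → X → X) (hπ : IsFlow π) (N : Set X) (hNcpt : IsCompact N)
    (hNiso : Ainv π N ⊆ interior N)
    (heq : Aminus π N = Ainv π N) (hne : (Ainv π N).Nonempty) :
    ∃ B : Set X, IsClosed B ∧ Ainv π N ⊆ interior B ∧ B ⊆ interior N ∧
      Ainv π B = Ainv π N ∧ Aplus π B = B ∧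
      ∀ x ∈ frontier B, ∃ ε > 0, ∀ t ∈ Set.Ioo (0:ℝ) ε,
        π (-t) x ∉ B ∧ π t x ∈ interior B := by

  have hflow0 : ∀ z : X, π 0 z = z := hπ.2.1
  set K := Ainv π N with hKdef
  -- basic facts about K
  have hKiff : ∀ x, x ∈ K ↔ ∀ t : ℝ, π t x ∈ N := by
    intro x
    constructor
    · rintro ⟨⟨hxN, hp⟩, ⟨_, hm⟩⟩ t
      rcases le_or_gt 0 t with h | h
      · exact hp t h
      · have := hm (-t) (by linarith)
        rwa [neg_neg] at this
    · intro h
      have hxN : x ∈ N := by have := h 0; rwa [hflow0] at this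
      exact ⟨⟨hxN, fun t _ => h t⟩, ⟨hxN, fun t _ => h (-t)⟩⟩
  have hKsub : K ⊆ N := fun x hx => by
    have := (hKiff x).1 hx 0; rwa [hflow0] at this
  have hKcl : IsClosed K := by
    have hrw : K = ⋂ t : ℝ, (fun x => π t x) ⁻¹' N := by
      ext x
      rw [mem_iInter]
      exact ⟨fun h t => (hKiff x).1 h t, fun h => (hKiff x).2 fun t => h t⟩
    rw [hrw]
    exact isClosed_iInter fun t => hNcpt.isClosed.preimage (hπ.cont_x t)
  have hKcpt : IsCompact K := hNcpt.of_isClosed_subset hKcl hKsub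
  have hKinv : ∀ x ∈ K, ∀ t : ℝ, π t x ∈ K := by
    intro x hx t
    apply (hKiff _).2
    intro s
    rw [← hπ.addf]
    exact (hKiff x).1 hx (s + t)
  -- choose ε₀ with C = {infDist ≤ ε₀} ⊆ interior N
  obtain ⟨δ, hδpos, hδsub⟩ := hKcpt.exists_cthickening_subset_open isOpen_interior hNiso
  set ε₀ := δ / 2 with hε₀def
  have hε₀ : 0 < ε₀ := by positivity
  set C := {x : X | infDist x K ≤ ε₀} with hCdef
  have hCmem : ∀ x, x ∈ C ↔ infDist x K ≤ ε₀ := fun _ => Iff.rfl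
  have hCsub : C ⊆ interior N := by
    intro z hz
    apply hδsub
    have hlt : infDist z K < δ := lt_of_le_of_lt hz (by simp only [hε₀def]; linarith)
    obtain ⟨k, hk, hdk⟩ := (infDist_lt_iff hne).1 hlt
    exact mem_cthickening_of_dist_le z k δ K hk hdk.le
  have hCcl : IsClosed C := isClosed_le (continuous_infDist_pt K) continuous_const
  have hCcpt : IsCompact C := hNcpt.of_isClosed_subset hCcl (hCsub.trans interior_subset)
  have hCK : ∀ z ∈ C, (∀ s : ℝ, 0 ≤ s → π (-s) z ∈ C) → z ∈ K := by
    intro z hz hb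
    have hzA : z ∈ Aminus π N :=
      ⟨(hCsub.trans interior_subset) hz, fun s hs => (hCsub.trans interior_subset) (hb s hs)⟩
    rw [heq] at hzA
    exact hzA
  -- stability and attraction
  have hstab := stab hπ hε₀ hKcl hne hKinv hCcpt hCmem hCK
  obtain ⟨δ₁, hδ₁pos, hδ₁le, hδ₁⟩ := hstab ε₀ hε₀ le_rfl
  have hattr := attrlem hπ hCcpt hCmem hCK hδ₁
  -- eventual smallness of the distance to K along forward orbits
  have hev : ∀ x, infDist x K ≤ δ₁ → ∀ η : ℝ, 0 < η →
      ∃ T, 0 ≤ T ∧ ∀ u, T ≤ u → infDist (π u x) K < η := by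
    intro x hx η hη
    have hη' : 0 < min η ε₀ := lt_min hη hε₀
    obtain ⟨δ', hδ'pos, hδ'le, hδ'⟩ := hstab (min η ε₀) hη' (min_le_right _ _)
    obtain ⟨T, hT0, hTlt⟩ := hattr x hx δ' hδ'pos
    refine ⟨T, hT0, fun u hu => ?_⟩
    have h1 := hδ' (π T x) hTlt.le (u - T) (by linarith)
    rw [← hπ.addf, sub_add_cancel] at h1
    exact lt_of_lt_of_le h1 (min_le_left _ _)
  -- the Lyapunov sublevel set
  set c := min δ₁ ε₀ / 4 with hcdef
  have hcpos : 0 < c := by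
    have := lt_min hδ₁pos hε₀; positivity
  have h2cδ₁ : 2 * c < δ₁ := by
    have h1 : min δ₁ ε₀ ≤ δ₁ := min_le_left _ _
    have h2 : 0 < min δ₁ ε₀ := lt_min hδ₁pos hε₀
    simp only [hcdef]; linarith
  have h2cε₀ : 2 * c < ε₀ := by
    have h1 : min δ₁ ε₀ ≤ ε₀ := min_le_right _ _
    have h2 : 0 < min δ₁ ε₀ := lt_min hδ₁pos hε₀
    simp only [hcdef]; linarith
  set B := {x : X | Vf π K ε₀ x ≤ c} with hBdef
  have hBmem : ∀ x, x ∈ B ↔ Vf π K ε₀ x ≤ c := fun _ => Iff.rfl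
  have hBnear : ∀ z ∈ B, infDist z K ≤ 2 * c := by
    intro z hz
    have h1 : min (infDist z K) ε₀ ≤ 2 * Vf π K ε₀ z := near_of_Vf hπ hε₀
    have h2 : 2 * Vf π K ε₀ z ≤ 2 * c := by
      have := (hBmem z).1 hz; linarith
    rcases min_cases (infDist z K) ε₀ with ⟨hmin, _⟩ | ⟨hmin, hcase⟩
    · rw [hmin] at h1; linarith
    · rw [hmin] at h1; linarith
  have hBδ₁ : ∀ z ∈ B, infDist z K ≤ δ₁ := fun z hz => (hBnear z hz).trans h2cδ₁.le
  have hBcl : IsClosed B := by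
    have hrw : B = ⋂ (t : ℝ), ⋂ (_ : 0 ≤ t), {x : X | tmf π K ε₀ x t ≤ c} := by
      ext x
      simp only [mem_iInter, mem_setOf_eq, hBdef]
      exact ⟨fun h t ht => le_trans (tmf_le_Vf hε₀ ht) h, fun h => Vf_le hε₀ h⟩
    rw [hrw]
    refine isClosed_iInter fun t => isClosed_iInter fun ht => ?_
    exact isClosed_le ((((continuous_infDist_pt K).comp (hπ.cont_x t)).min
      continuous_const).mul continuous_const) continuous_const
  have hKV0 : ∀ x ∈ K, Vf π K ε₀ x = 0 := by
    intro x hx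
    refine le_antisymm (Vf_le hε₀ fun t ht => ?_) (Vf_nonneg hε₀ x)
    unfold tmf
    rw [infDist_zero_of_mem (hKinv x hx t), min_eq_left hε₀.le, zero_mul]
  have hKB : K ⊆ B := fun x hx => (hBmem x).2 (by rw [hKV0 x hx]; exact hcpos.le)
  have hBsubN : B ⊆ N := by
    intro z hz
    exact interior_subset (hCsub ((hCmem z).2 ((hBnear z hz).trans h2cε₀.le)))
  -- openness of the strict sublevel set near attracted points
  have hopen : ∀ x, infDist x K ≤ δ₁ → Vf π K ε₀ x < c → ∀ᶠ y in 𝓝 x, Vf π K ε₀ y ≤ c := by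
    intro x hx hVx
    set η := c - Vf π K ε₀ x with hηdef
    have hηpos : 0 < η := by simp only [hηdef]; linarith
    have hVxnn : 0 ≤ Vf π K ε₀ x := Vf_nonneg hε₀ x
    have hηc : η ≤ c := by simp only [hηdef]; linarith
    have hη'' : 0 < min η ε₀ / 2 := by
      have := lt_min hηpos hε₀; positivity
    have hη''le : min η ε₀ / 2 ≤ ε₀ := by
      have : min η ε₀ ≤ ε₀ := min_le_right _ _; linarith
    obtain ⟨δ', hδ'pos, hδ'le, hδ'⟩ := hstab (min η ε₀ / 2) hη'' hη''le
    obtain ⟨T, hT0, hTlt⟩ := hattr x hx (δ' / 2) (by linarith)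
    set θ := min (η / 2) (δ' / 2) with hθdef
    have hθpos : 0 < θ := lt_min (by linarith) (by linarith)
    filter_upwards [hπ.tube x T θ hθpos] with y hy
    apply Vf_le hε₀
    intro t ht
    rcases le_or_gt t T with htT | htT
    · have h1 : dist (π t y) (π t x) < θ := hy t ⟨ht, htT⟩
      have h2 : infDist (π t y) K ≤ infDist (π t x) K + θ := by
        have h2a : infDist (π t y) K ≤ infDist (π t x) K + dist (π t y) (π t x) :=
          infDist_le_infDist_add_dist
        linarith
      have h3 : min (infDist (π t y) K) ε₀ ≤ min (infDist (π t x) K) ε₀ + θ := by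
        rcases le_total (infDist (π t x) K) ε₀ with hc1 | hc1
        · calc min (infDist (π t y) K) ε₀ ≤ infDist (π t y) K := min_le_left _ _
            _ ≤ infDist (π t x) K + θ := h2
            _ = min (infDist (π t x) K) ε₀ + θ := by rw [min_eq_left hc1]
        · calc min (infDist (π t y) K) ε₀ ≤ ε₀ := min_le_right _ _
            _ ≤ min (infDist (π t x) K) ε₀ + θ := by rw [min_eq_right hc1]; linarith
      have h4 : tmf π K ε₀ y t ≤ (min (infDist (π t x) K) ε₀ + θ) * ((1+t)/(2+t)) :=
        mul_le_mul_of_nonneg_right h3 (wgt0 ht).le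
      have h5 : (min (infDist (π t x) K) ε₀ + θ) * ((1+t)/(2+t))
          = tmf π K ε₀ x t + θ * ((1+t)/(2+t)) := by unfold tmf; ring
      have h6 : θ * ((1+t)/(2+t)) ≤ θ := by
        have := wle1 ht
        nlinarith [wgt0 ht]
      have h7 : tmf π K ε₀ x t ≤ Vf π K ε₀ x := tmf_le_Vf hε₀ ht
      have h8 : θ ≤ η / 2 := min_le_left _ _
      have := h4
      rw [h5] at this
      simp only [hηdef] at *
      linarith
    · have h1 : dist (π T y) (π T x) < θ := hy T ⟨hT0, le_rfl⟩
      have h2 : infDist (π T y) K ≤ δ' := by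
        have h2a : infDist (π T y) K ≤ infDist (π T x) K + dist (π T y) (π T x) :=
          infDist_le_infDist_add_dist
        have h2b : θ ≤ δ' / 2 := min_le_right _ _
        linarith
      have h3 := hδ' (π T y) h2 (t - T) (by linarith)
      rw [← hπ.addf, sub_add_cancel] at h3
      have h4 : tmf π K ε₀ y t ≤ min (infDist (π t y) K) ε₀ := by
        calc tmf π K ε₀ y t ≤ min (infDist (π t y) K) ε₀ * 1 :=
              mul_le_mul_of_nonneg_left (wle1 ht) (le_min infDist_nonneg hε₀.le)
          _ = _ := mul_one _
      have h5 : min (infDist (π t y) K) ε₀ ≤ infDist (π t y) K := min_le_left _ _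
      have h6 : min η ε₀ / 2 ≤ η / 2 := by
        have : min η ε₀ ≤ η := min_le_left _ _; linarith
      linarith
  have hKint : K ⊆ interior B := by
    intro x hx
    rw [mem_interior_iff_mem_nhds]
    have h1 : infDist x K ≤ δ₁ := by
      rw [infDist_zero_of_mem hx]; exact hδ₁pos.le
    have h2 : Vf π K ε₀ x < c := by rw [hKV0 x hx]; exact hcpos
    exact (hopen x h1 h2).mono fun y hy => (hBmem y).2 hy
  have hBintN : B ⊆ interior N :=
    fun z hz => hCsub ((hCmem z).2 ((hBnear z hz).trans h2cε₀.le))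
  refine ⟨B, hBcl, hKint, hBintN, ?_, ?_, ?_⟩
  · -- Ainv π B = K
    apply subset_antisymm
    · rintro x ⟨⟨hxB, hp⟩, ⟨_, hm⟩⟩
      apply (hKiff x).2
      intro t
      rcases le_or_gt 0 t with h | h
      · exact hBsubN (hp t h)
      · have := hm (-t) (by linarith)
        rw [neg_neg] at this
        exact hBsubN this
    · intro x hx
      exact ⟨⟨hKB hx, fun t _ => hKB (hKinv x hx t)⟩, ⟨hKB hx, fun t _ => hKB (hKinv x hx (-t))⟩⟩
  · -- Aplus π B = B
    apply subset_antisymm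
    · exact fun x hx => hx.1
    · intro x hx
      exact ⟨hx, fun t ht => (hBmem _).2 (le_trans (Vf_decrease hπ hε₀ x ht) ((hBmem x).1 hx))⟩
  · -- frontier behavior
    intro x hxf
    have hxB : x ∈ B := hBcl.frontier_subset hxf
    have hxnint : x ∉ interior B := fun h => hxf.2 h
    have hVxc : Vf π K ε₀ x = c := by
      by_contra hne'
      have hlt : Vf π K ε₀ x < c := lt_of_le_of_ne ((hBmem x).1 hxB) hne'
      exact hxnint (mem_interior_iff_mem_nhds.2
        ((hopen x (hBδ₁ x hxB) hlt).mono fun y hy => (hBmem y).2 hy))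
    refine ⟨1, one_pos, fun t ht => ?_⟩
    obtain ⟨ht0, _⟩ := ht
    constructor
    · -- backward: π (-t) x ∉ B
      intro hyB
      have hxy : π t (π (-t) x) = x := by
        rw [← hπ.addf, add_neg_cancel, hflow0]
      have h1 : Vf π K ε₀ x ≤ Vf π K ε₀ (π (-t) x) := by
        calc Vf π K ε₀ x = Vf π K ε₀ (π t (π (-t) x)) := by rw [hxy]
          _ ≤ Vf π K ε₀ (π (-t) x) := Vf_decrease hπ hε₀ _ ht0.le
      have hVy : 0 < Vf π K ε₀ (π (-t) x) := by
        rw [hVxc] at h1; linarith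
      have h2 := Vf_strict_decrease hπ hε₀ (π (-t) x)
        (hev _ (hBδ₁ _ hyB)) ht0 hVy
      rw [hxy] at h2
      have h3 : Vf π K ε₀ (π (-t) x) ≤ c := (hBmem _).1 hyB
      rw [hVxc] at h2
      linarith
    · -- forward: π t x ∈ interior B
      have hVy : Vf π K ε₀ (π t x) < c := by
        have := Vf_strict_decrease hπ hε₀ x (hev x (hBδ₁ x hxB)) ht0
          (by rw [hVxc]; exact hcpos)
        rwa [hVxc] at this
      have hyB : π t x ∈ B := (hBmem _).2 hVy.le
      exact mem_interior_iff_mem_nhds.2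
        ((hopen _ (hBδ₁ _ hyB) hVy).mono fun y hy => (hBmem y).2 hy)
end

section
/- Let π₀ be a flow on a locally compact metric space X, B a compact stable isolating block for π₀ with A_{π₀}(B) ≠ ∅, and N = ℝ × B. Let (π_n) be a sequence of flows on ℝ × X converging semi-singularly to π₀. Then for every T > 0 there is n₀ such that G^T_{π_n}(N) ≠ ∅ for all n ≥ n₀. -/
open Set Metric Filter Topology

/-- If `B` is a compact stable isolating block for `π₀` with `A_{π₀}(B) ≠ ∅` and
`π_n → π₀` semi-singularly, then for every `T > 0` the sets `G^T_{π_n}(ℝ × B)` are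
eventually nonempty. -/
theorem stmt6 {X : Type*} [MetricSpace X] [LocallyCompactSpace X]
    (π₀ : ℝ → X → X) (hπ₀ : IsFlow π₀) (B : Set X) (hBcpt : IsCompact B)
    (hB : IsStableIsolatingBlock π₀ B) (hne : (Ainv π₀ B).Nonempty)
    (πn : ℕ → ℝ → ℝ × X → ℝ × X) (hflow : ∀ n, IsFlow (πn n))
    (hss : SemiSingConv πn π₀) :
    ∀ T > (0:ℝ), ∃ n₀ : ℕ, ∀ n ≥ n₀,
      (Gset (πn n) T ((Set.univ : Set ℝ) ×ˢ B)).Nonempty := by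
  intro T hT
  by_contra hcon
  push_neg at hcon
  obtain ⟨x₀, hx₀⟩ := hne
  have horb : ∀ r : ℝ, π₀ r x₀ ∈ B := by
    intro r
    rcases le_or_gt 0 r with hr | hr
    · exact hx₀.1.2 r hr
    · have := hx₀.2.2 (-r) (by linarith)
      simpa using this
  have hAinvinv : ∀ r : ℝ, π₀ r x₀ ∈ Ainv π₀ B := by
    intro r
    refine ⟨⟨horb r, fun t ht => ?_⟩, ⟨horb r, fun t ht => ?_⟩⟩
    · rw [← hπ₀.2.2]; exact horb _
    · rw [← hπ₀.2.2]; exact horb _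
  -- bad indices
  have hbad : ∀ N : ℕ, ∃ n ≥ N, ∃ s ∈ Set.Icc (0:ℝ) (2*T),
      (πn n s (0, x₀)).2 ∉ B := by
    intro N
    obtain ⟨n, hn, hempty⟩ := hcon N
    refine ⟨n, hn, ?_⟩
    have hz : πn n T (0, x₀) ∉ Gset (πn n) T ((Set.univ : Set ℝ) ×ˢ B) := by
      intro hmem
      rw [hempty] at hmem
      exact hmem
    simp only [Gset, Set.mem_setOf_eq, not_forall] at hz
    obtain ⟨t, ht, hnot⟩ := hz
    rw [← (hflow n).2.2] at hnot
    refine ⟨t + T, ⟨by linarith [ht.1], by linarith [ht.2]⟩, fun hmemB => ?_⟩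
    exact hnot (subset_closure (by simp [Set.mem_prod, hmemB]))
  have hfreq : ∃ᶠ n in Filter.atTop, ∃ s ∈ Set.Icc (0:ℝ) (2*T),
      (πn n s (0, x₀)).2 ∉ B := Filter.frequently_atTop.2 hbad
  obtain ⟨φ, hφmono, hφ⟩ := Filter.extraction_of_frequently_atTop hfreq
  choose sf hsf hsfB using hφ
  obtain ⟨s₀, hs₀, ψ, hψmono, hψ⟩ := isCompact_Icc.tendsto_subseq hsf
  set σ : ℕ → ℕ := φ ∘ ψ with hσdef
  have hσmono : StrictMono σ := hφmono.comp hψmono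
  set g : ℕ → ℝ := fun k => sf (ψ k) with hgdef
  have hg : Filter.Tendsto g Filter.atTop (nhds s₀) := hψ
  classical
  set t : ℕ → ℝ := fun n => if h : ∃ k, σ k = n then g h.choose else s₀ with htdef
  have ht_eq : ∀ k, t (σ k) = g k := by
    intro k
    have h : ∃ k', σ k' = σ k := ⟨k, rfl⟩
    have := h.choose_spec
    have hk : h.choose = k := hσmono.injective this
    simp only [htdef, dif_pos h, hk]
  have ht_pos : ∀ n, 0 ≤ t n := by
    intro n
    simp only [htdef]
    split
    · exact (hsf _).1
    · exact hs₀.1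
  have ht_tendsto : Filter.Tendsto t Filter.atTop (nhds s₀) := by
    rw [Metric.tendsto_atTop]
    intro ε hε
    obtain ⟨K, hK⟩ := (Metric.tendsto_atTop.1 hg) ε hε
    refine ⟨σ K, fun n hn => ?_⟩
    simp only [htdef]
    split
    · rename_i h
      have hspec := h.choose_spec
      have : K ≤ h.choose := by
        by_contra hlt
        push_neg at hlt
        have := hσmono hlt
        omega
      exact hK _ this
    · simpa using hε
  have hlim := hss (fun _ => 0) (fun _ => x₀) x₀ t s₀ tendsto_const_nhds ht_pos ht_tendsto
  have hmem : π₀ s₀ x₀ ∈ interior B := hB.2.1 (hAinvinv s₀)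
  have hev : ∀ᶠ n in Filter.atTop, (πn n (t n) (0, x₀)).2 ∈ interior B :=
    hlim (IsOpen.mem_nhds isOpen_interior hmem)
  obtain ⟨N, hN⟩ := Filter.eventually_atTop.1 hev
  have hk := hN (σ N) (le_trans (hσmono.le_apply) le_rfl)
  rw [ht_eq N] at hk
  exact hsfB (ψ N) (interior_subset hk)
end

section
/- Let π₀ be a flow on a locally compact metric space X, B a compact stable isolating block for π₀, and N = ℝ × B. Let (π_n) be a sequence of flows on ℝ × X converging semi-singularly to π₀. Then there exist T₀ > 0 and n₀ ∈ ℕ such that for all T ≥ T₀ and all n ≥ n₀, Γ^T_{π_n}(N) = ∅. -/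
open Set Metric Filter Topology

set_option maxHeartbeats 1000000 in
/-- If `B` is a compact stable isolating block for `π₀` and `π_n → π₀` semi-singularly,
then there are `T₀ > 0` and `n₀` such that `Γ^T_{π_n}(ℝ × B) = ∅` for all `T ≥ T₀`
and `n ≥ n₀`. -/
theorem stmt7 {X : Type*} [MetricSpace X] [LocallyCompactSpace X]
    (π₀ : ℝ → X → X) (hπ₀ : IsFlow π₀) (B : Set X) (hBcpt : IsCompact B)
    (hB : IsStableIsolatingBlock π₀ B)
    (πn : ℕ → ℝ → ℝ × X → ℝ × X) (hflow : ∀ n, IsFlow (πn n))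
    (hss : SemiSingConv πn π₀) :
    ∃ T₀ > (0:ℝ), ∃ n₀ : ℕ, ∀ T ≥ T₀, ∀ n ≥ n₀,
      GammaSet (πn n) T ((Set.univ : Set ℝ) ×ˢ B) = ∅ := by
  classical
  by_contra h
  push_neg at h
  have h' : ∀ k : ℕ, ∃ T ≥ (k + 1 : ℝ), ∃ n ≥ k,
      (GammaSet (πn n) T ((Set.univ : Set ℝ) ×ˢ B)).Nonempty := by
    intro k
    obtain ⟨T, hT, n, hn, hne⟩ := h (k + 1) (by positivity) k
    exact ⟨T, hT, n, hn, hne⟩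
  choose T hT n hn z hz using h'
  choose τ hτ hzfr using fun k => (hz k).2
  set w : ℕ → ℝ × X := fun k => πn (n k) (τ k) (z k) with hw
  set x : ℕ → X := fun k => (w k).2 with hx
  have hcl : closure ((Set.univ : Set ℝ) ×ˢ B) = (Set.univ : Set ℝ) ×ˢ B := by
    rw [closure_prod_eq, closure_univ, hB.1.closure_eq]
  have hxfr : ∀ k, x k ∈ frontier B := by
    intro k
    have hk := hzfr k
    rw [frontier_univ_prod_eq] at hk
    exact hk.2
  -- points stay in `B` on a long backward window around `w k`
  have key : ∀ (k : ℕ) (t : ℝ), t + τ k ∈ Set.Icc (-(T k)) (T k) →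
      (πn (n k) t (w k)).2 ∈ B := by
    intro k t ht
    have hmem := (hz k).1 (t + τ k) ht
    rw [hcl] at hmem
    have heq : πn (n k) (t + τ k) (z k) = πn (n k) t (w k) :=
      (hflow (n k)).2.2 t (τ k) (z k)
    rw [heq] at hmem
    exact hmem.2
  -- extract a convergent subsequence of boundary points
  obtain ⟨x₀, hx₀B, φ, hφ, hxconv⟩ :=
    hBcpt.tendsto_subseq (x := x) (fun k => hB.1.frontier_subset (hxfr k))
  have hx₀fr : x₀ ∈ frontier B :=
    isClosed_frontier.mem_of_tendsto hxconv
      (Filter.Eventually.of_forall fun j => hxfr (φ j))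
  obtain ⟨ε, hε, hexit⟩ := hB.2.2.2 x₀ hx₀fr
  set t : ℝ := ε / 2 with htdef
  have ht : t ∈ Set.Ioo (0 : ℝ) ε := by
    rw [htdef]; constructor <;> linarith
  set M : ℕ := ⌈t⌉₊ with hM
  set k' : ℕ → ℕ := fun j => φ (j + M) with hk'
  have hTt : ∀ j, t ≤ T (k' j) := by
    intro j
    have h1 : t ≤ (M : ℝ) := Nat.le_ceil t
    have h2 : (M : ℝ) ≤ (k' j : ℝ) := by
      have hle : M ≤ φ (j + M) := le_trans (Nat.le_add_left M j) hφ.le_apply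
      exact_mod_cast hle
    linarith [hT (k' j)]
  set y : ℕ → X := fun j => (πn (n (k' j)) (-t) (w (k' j))).2 with hy
  have hyB : ∀ j, y j ∈ B := by
    intro j
    apply key
    constructor
    · have h1 := (hτ (k' j)).1
      have h2 := hTt j
      linarith
    · have h1 := (hτ (k' j)).2
      linarith [ht.1]
  obtain ⟨y₀, hy₀B, ψ, hψ, hyconv⟩ := hBcpt.tendsto_subseq (x := y) hyB
  -- the sequence of flow indices, made strictly monotone
  set gl : ℕ → ℕ := fun j => n (k' (ψ j)) with hgl
  have hglge : ∀ j, j ≤ gl j := by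
    intro j
    calc j ≤ ψ j := hψ.le_apply
    _ ≤ ψ j + M := Nat.le_add_right _ _
    _ ≤ φ (ψ j + M) := hφ.le_apply
    _ ≤ n (k' (ψ j)) := hn _
  obtain ⟨θ, hθ, hgθ⟩ := strictMono_subseq_of_id_le hglge
  have hinj : Function.Injective (gl ∘ θ) := hgθ.injective
  -- full sequences for semi-singular convergence, defined on all of ℕ
  set F : ℕ → X := fun m =>
    if h : ∃ i, gl (θ i) = m then y (ψ (θ (Nat.find h))) else y₀ with hF
  set S : ℕ → ℝ := fun m =>
    if h : ∃ i, gl (θ i) = m then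
      (πn m (-t) (w (k' (ψ (θ (Nat.find h)))))).1 else 0 with hS
  have hfind : ∀ (i : ℕ) (h : ∃ i', gl (θ i') = gl (θ i)), Nat.find h = i := by
    intro i h
    exact hinj (Nat.find_spec h)
  have hFval : ∀ i, F (gl (θ i)) = y (ψ (θ i)) := by
    intro i
    have hex : ∃ i', gl (θ i') = gl (θ i) := ⟨i, rfl⟩
    rw [hF]
    simp only [dif_pos hex, hfind i hex]
  have hSval : ∀ i, S (gl (θ i)) = (πn (gl (θ i)) (-t) (w (k' (ψ (θ i))))).1 := by
    intro i
    have hex : ∃ i', gl (θ i') = gl (θ i) := ⟨i, rfl⟩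
    rw [hS]
    simp only [dif_pos hex, hfind i hex]
  -- F tends to y₀
  have hyθ : Filter.Tendsto (fun i => y (ψ (θ i))) Filter.atTop (nhds y₀) :=
    hyconv.comp hθ.tendsto_atTop
  have hFtend : Filter.Tendsto F Filter.atTop (nhds y₀) := by
    rw [Metric.tendsto_atTop] at hyθ ⊢
    intro δ hδ
    obtain ⟨I, hI⟩ := hyθ δ hδ
    refine ⟨gl (θ I), fun m hm => ?_⟩
    by_cases hex : ∃ i, gl (θ i) = m
    · rw [hF]
      simp only [dif_pos hex]
      apply hI
      have hspec : gl (θ (Nat.find hex)) = m := Nat.find_spec hex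
      have : gl (θ I) ≤ gl (θ (Nat.find hex)) := by rw [hspec]; exact hm
      exact hgθ.le_iff_le.mp this
    · rw [hF]
      simp only [dif_neg hex, dist_self]
      exact hδ
  -- apply semi-singular convergence and restrict to the subsequence
  have hssfull := hss S F y₀ (fun _ => t) t hFtend (fun _ => ht.1.le) tendsto_const_nhds
  have hsub : Filter.Tendsto (fun i => (πn (gl (θ i)) t (S (gl (θ i)), F (gl (θ i)))).2)
      Filter.atTop (nhds (π₀ t y₀)) := hssfull.comp hgθ.tendsto_atTop
  -- identify the subsequence terms with boundary points
  have hid : ∀ i, (πn (gl (θ i)) t (S (gl (θ i)), F (gl (θ i)))).2 = x (k' (ψ (θ i))) := by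
    intro i
    rw [hFval i, hSval i]
    have hpair : ((πn (gl (θ i)) (-t) (w (k' (ψ (θ i))))).1, y (ψ (θ i)))
        = πn (gl (θ i)) (-t) (w (k' (ψ (θ i)))) := by
      rw [hy]
    rw [hpair]
    have h2 : πn (gl (θ i)) t (πn (gl (θ i)) (-t) (w (k' (ψ (θ i)))))
        = πn (gl (θ i)) (t + -t) (w (k' (ψ (θ i)))) :=
      ((hflow (gl (θ i))).2.2 t (-t) _).symm
    rw [h2]
    norm_num [(hflow (gl (θ i))).2.1]
    rfl
  have hsub' : Filter.Tendsto (fun i => x (k' (ψ (θ i)))) Filter.atTop (nhds (π₀ t y₀)) := by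
    simpa only [hid] using hsub
  -- but this sequence also tends to x₀
  have hxconv' : Filter.Tendsto (fun i => x (k' (ψ (θ i)))) Filter.atTop (nhds x₀) := by
    have htnd : Filter.Tendsto (fun i => ψ (θ i) + M) Filter.atTop Filter.atTop :=
      Filter.tendsto_atTop_mono
        (fun i => le_trans (hψ.comp hθ).le_apply (Nat.le_add_right _ _)) Filter.tendsto_id
    have h3 := hxconv.comp htnd
    simpa only [Function.comp_def, hk'] using h3
  have heq : π₀ t y₀ = x₀ := tendsto_nhds_unique hsub' hxconv'
  -- hence the backward orbit point lies in B, contradiction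
  have hback : π₀ (-t) x₀ = y₀ := by
    rw [← heq, ← hπ₀.2.2 (-t) t y₀]
    norm_num [hπ₀.2.1]
  exact (hexit t ht).1 (hback ▸ hy₀B)
end

section
/- Let X be a locally compact metric space, B ⊆ X compact, N = ℝ × B, π₀ a flow on X, and (π_n) a sequence of flows on ℝ × X converging semi-singularly to π₀. Suppose y_n ∈ N and t_n → ∞ are sequences with y_nπ_n[0,t_n] ⊆ N, and suppose P₂(y_nπ_n t_n) → z̃⁰ in X. Then z̃⁰ ∈ A⁻_{π₀}(B), i.e. z̃⁰π₀(−t) ∈ B for all t ≥ 0. -/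
open Set Metric Filter Topology

/-- If `y_n ∈ N = ℝ × B` (`B` compact), `t_n → ∞`, `y_n π_n [0,t_n] ⊆ N` and the
projected endpoints `P₂(y_n π_n t_n)` converge to `z̃⁰`, then `z̃⁰ ∈ A⁻_{π₀}(B)`. -/
theorem stmt8 {X : Type*} [MetricSpace X] [LocallyCompactSpace X]
    (π₀ : ℝ → X → X) (hπ₀ : IsFlow π₀) (B : Set X) (hBcpt : IsCompact B)
    (πn : ℕ → ℝ → ℝ × X → ℝ × X) (hflow : ∀ n, IsFlow (πn n))
    (hss : SemiSingConv πn π₀)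
    (y : ℕ → ℝ × X) (hy : ∀ n, y n ∈ (Set.univ : Set ℝ) ×ˢ B)
    (t : ℕ → ℝ) (ht0 : ∀ n, 0 ≤ t n) (ht : Filter.Tendsto t Filter.atTop Filter.atTop)
    (horbit : ∀ n, ∀ r ∈ Set.Icc 0 (t n), πn n r (y n) ∈ (Set.univ : Set ℝ) ×ˢ B)
    (z : X) (hz : Filter.Tendsto (fun n => (πn n (t n) (y n)).2) Filter.atTop (nhds z)) :
    z ∈ Aminus π₀ B := by
  have hBclosed : IsClosed B := hBcpt.isClosed
  have hzB : z ∈ B := by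
    refine hBclosed.mem_of_tendsto hz (Filter.Eventually.of_forall fun n => ?_)
    exact ((horbit n (t n) ⟨ht0 n, le_refl _⟩).2)
  refine ⟨hzB, fun s hs => ?_⟩
  -- points at time `t n - s` (truncated at 0)
  set u : ℕ → ℝ := fun n => max (t n - s) 0 with hu
  have hu0 : ∀ n, 0 ≤ u n := fun n => le_max_right _ _
  have hut : ∀ n, u n ≤ t n := fun n =>
    max_le (by linarith [hs]) (ht0 n)
  set x : ℕ → X := fun n => (πn n (u n) (y n)).2 with hxdef
  have hxB : ∀ n, x n ∈ B := fun n => (horbit n (u n) ⟨hu0 n, hut n⟩).2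
  obtain ⟨w, hwB, φ, hφ, hconv⟩ := hBcpt.tendsto_subseq hxB
  -- extend the subsequence to a full sequence converging to `w`
  classical
  set Y : ℕ → X := fun n => if ∃ k, φ k = n then x n else w with hY
  have hYφ : ∀ k, Y (φ k) = x (φ k) := fun k => by
    simp only [hY]; rw [if_pos ⟨k, rfl⟩]
  have hYconv : Filter.Tendsto Y Filter.atTop (nhds w) := by
    rw [Metric.tendsto_atTop]
    intro ε hε
    obtain ⟨K, hK⟩ := (Metric.tendsto_atTop.1 hconv) ε hε
    refine ⟨φ K, fun n hn => ?_⟩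
    by_cases h : ∃ k, φ k = n
    · obtain ⟨k, rfl⟩ := h
      rw [hYφ k]
      exact hK k (hφ.le_iff_le.mp hn)
    · simp only [hY, if_neg h]
      simpa using hε
  -- semi-singular convergence with constant time `s`
  have hlim := hss (fun n => (πn n (u n) (y n)).1) Y w (fun _ => s) s hYconv
    (fun _ => hs) tendsto_const_nhds
  have hφtop : Filter.Tendsto φ Filter.atTop Filter.atTop := hφ.tendsto_atTop
  have hlimφ := hlim.comp hφtop
  have hzφ := hz.comp hφtop
  -- eventually `t (φ k) ≥ s`, and then the two sequences agree
  have hev : ∀ᶠ k in Filter.atTop, s ≤ t (φ k) :=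
    (ht.comp hφtop).eventually_ge_atTop s
  have heq : ∀ᶠ k in Filter.atTop,
      (πn (φ k) s (((πn (φ k) (u (φ k)) (y (φ k))).1, Y (φ k)))).2
        = (πn (φ k) (t (φ k)) (y (φ k))).2 := by
    filter_upwards [hev] with k hk
    have huk : u (φ k) = t (φ k) - s := max_eq_left (by linarith)
    have hpair : (((πn (φ k) (u (φ k)) (y (φ k))).1, Y (φ k)))
        = πn (φ k) (u (φ k)) (y (φ k)) := by
      rw [hYφ k]
    rw [hpair, ← (hflow (φ k)).2.2 s (u (φ k)) (y (φ k)), huk]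
    congr 2
    ring
  have : π₀ s w = z :=
    tendsto_nhds_unique (hlimφ.congr' heq) hzφ
  have : π₀ (-s) z = w := by
    rw [← this, ← (hπ₀.2.2 (-s) s w), neg_add_cancel, hπ₀.2.1]
  rw [this]
  exact hwB
end

section
/- Let π₀ be a flow on a locally compact metric space X, B a compact stable isolating block for π₀, N = ℝ × B, π the product flow on ℝ × X, and (π_n) a sequence of skew product flows on ℝ × X converging semi-singularly to π₀. Let T > 0 and n be such that Γ^T_{π_n}(N) = ∅ and G^T_{π_n}(N) ≠ ∅, and let δ > 0 be such that cl U_δ(B) is compact, U_δ(G^{2T}_π(N)) ⊆ G^T_π(N), U_δ(G^T_π(N)) ⊆ N and U_δ(G^T_π(U_δ(N))) ⊆ N. If d(xπ_n t, xπt) < δ/3 for all t ∈ [−T,T] and all x ∈ ℝ × cl U_δ(B), then A_{π_n}(N) is a nonempty isolated invariant set of π_n (A_{π_n}(N) ⊆ int N), every t-slice A_{π_n}(N) ∩ ({t} × X) is nonempty and compact, and there exists ε > 0, depending only on π₀, B, T and δ, such that U_ε(A_{π_n}(N)) ⊆ G^T_{π_n}(N). -/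
open Set Metric Filter Topology

section Aux

variable {Z : Type*} [MetricSpace Z]

private lemma flow_cont_right {ρ : ℝ → Z → Z} (h : IsFlow ρ) (z : Z) :
    Continuous fun t => ρ t z :=
  h.1.comp (continuous_id.prodMk continuous_const)

private lemma flow_cont_left {ρ : ℝ → Z → Z} (h : IsFlow ρ) (t : ℝ) :
    Continuous fun z => ρ t z :=
  h.1.comp (continuous_const.prodMk continuous_id)

private lemma prodFlow_isFlow {X : Type*} [MetricSpace X] {π₀ : ℝ → X → X} (h : IsFlow π₀) :
    IsFlow (prodFlow π₀) := by
  refine ⟨?_, ?_, ?_⟩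
  · show Continuous fun p : ℝ × (ℝ × X) => ((p.2.1 + p.1 : ℝ), π₀ p.1 p.2.2)
    exact (continuous_snd.fst.add continuous_fst).prodMk
      (h.1.comp (continuous_fst.prodMk continuous_snd.snd))
  · intro z; simp [prodFlow, h.2.1]
  · intro s t z
    show ((z.1 + (s + t) : ℝ), π₀ (s + t) z.2) = ((z.1 + t + s : ℝ), π₀ s (π₀ t z.2))
    rw [h.2.2]; congr 1; ring

private lemma Gset_subset' {ρ : ℝ → Z → Z} (hρ : IsFlow ρ) {Y : Set Z} (hY : IsClosed Y)
    {T : ℝ} (hT : 0 ≤ T) : Gset ρ T Y ⊆ Y := fun z hz => by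
  have := hz 0 ⟨neg_nonpos.mpr hT, hT⟩
  rwa [hρ.2.1, hY.closure_eq] at this

private lemma Ainv_orbit {ρ : ℝ → Z → Z} (hρ : IsFlow ρ) {Y : Set Z} {w : Z}
    (hw : w ∈ Ainv ρ Y) (r : ℝ) : ρ r w ∈ Y := by
  rcases le_or_gt 0 r with h | h
  · exact hw.1.2 r h
  · have := hw.2.2 (-r) (by linarith)
    rwa [neg_neg] at this

private lemma Ainv_shift {ρ : ℝ → Z → Z} (hρ : IsFlow ρ) {Y : Set Z} {w : Z}
    (hw : w ∈ Ainv ρ Y) (r : ℝ) : ρ r w ∈ Ainv ρ Y := by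
  have horb : ∀ s : ℝ, ρ s (ρ r w) ∈ Y := fun s => by
    rw [← hρ.2.2]; exact Ainv_orbit hρ hw (s + r)
  exact ⟨⟨Ainv_orbit hρ hw r, fun t _ => horb t⟩,
    ⟨Ainv_orbit hρ hw r, fun t _ => horb (-t)⟩⟩

private lemma isClosed_Ainv {ρ : ℝ → Z → Z} (hρ : IsFlow ρ) {Y : Set Z} (hY : IsClosed Y) :
    IsClosed (Ainv ρ Y) := by
  have h : Ainv ρ Y = Y ∩ ((⋂ t ∈ Ici (0:ℝ), (fun z => ρ t z) ⁻¹' Y) ∩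
      ⋂ t ∈ Ici (0:ℝ), (fun z => ρ (-t) z) ⁻¹' Y) := by
    ext z
    simp only [Ainv, Aplus, Aminus, mem_inter_iff, mem_setOf_eq, mem_iInter,
      mem_preimage, mem_Ici]
    tauto
  rw [h]
  exact hY.inter ((isClosed_biInter fun t _ => hY.preimage (flow_cont_left hρ t)).inter
    (isClosed_biInter fun t _ => hY.preimage (flow_cont_left hρ (-t))))

private lemma forward_in {ρ : ℝ → Z → Z} (hρ : IsFlow ρ) {Y : Set Z} (hY : IsClosed Y)
    {T : ℝ} (hT : 0 < T) (hΓ : GammaSet ρ T Y = ∅) {z : Z} (hz : z ∈ Gset ρ T Y) :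
    ∀ t, -T ≤ t → ρ t z ∈ Y := by
  have hz' : ∀ s ∈ Icc (-T) T, ρ s z ∈ Y := fun s hs => by
    have := hz s hs; rwa [hY.closure_eq] at this
  by_contra hcon
  push_neg at hcon
  obtain ⟨t₁, ht₁, ht₁n⟩ := hcon
  set Bad : Set ℝ := {s | -T ≤ s ∧ ρ s z ∉ Y} with hBadDef
  have hne : Bad.Nonempty := ⟨t₁, ht₁, ht₁n⟩
  have hbdd : BddBelow Bad := ⟨-T, fun b hb => hb.1⟩
  set τ := sInf Bad with hτdef
  have hτlb : T ≤ τ := by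
    refine le_csInf hne fun b hb => ?_
    by_contra hbT
    push_neg at hbT
    exact hb.2 (hz' b ⟨hb.1, hbT.le⟩)
  have hbelow : ∀ s, -T ≤ s → s < τ → ρ s z ∈ Y := by
    intro s hs hsτ
    by_contra hns
    exact absurd (csInf_le hbdd ⟨hs, hns⟩) (not_le.mpr hsτ)
  have hτY : ρ τ z ∈ Y := by
    have h0 : Tendsto (fun k : ℕ => ((k : ℝ) + 1)⁻¹) atTop (𝓝 0) := by
      simpa [one_div] using tendsto_one_div_add_atTop_nhds_zero_nat (𝕜 := ℝ)
    have hmin : Tendsto (fun k : ℕ => min (2 * T) ((k : ℝ) + 1)⁻¹) atTop (𝓝 0) := by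
      have hmin' : Tendsto (fun k : ℕ => min (2 * T) ((k : ℝ) + 1)⁻¹) atTop
          (𝓝 (min (2 * T) 0)) := Tendsto.min tendsto_const_nhds h0
      rwa [min_eq_right (by linarith : (0:ℝ) ≤ 2 * T)] at hmin'
    have h1 : Tendsto (fun k : ℕ => τ - min (2 * T) ((k : ℝ) + 1)⁻¹) atTop (𝓝 τ) := by
      have hsub : Tendsto (fun k : ℕ => τ - min (2 * T) ((k : ℝ) + 1)⁻¹) atTop
          (𝓝 (τ - 0)) := Tendsto.sub tendsto_const_nhds hmin
      simpa using hsub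
    have htend : Tendsto (fun k : ℕ => ρ (τ - min (2 * T) ((k : ℝ) + 1)⁻¹) z) atTop
        (𝓝 (ρ τ z)) := ((flow_cont_right hρ z).tendsto τ).comp h1
    refine hY.mem_of_tendsto htend (Eventually.of_forall fun k => ?_)
    have hkpos : (0:ℝ) < ((k : ℝ) + 1)⁻¹ := by positivity
    refine hbelow _ ?_ ?_
    · have : min (2 * T) ((k : ℝ) + 1)⁻¹ ≤ 2 * T := min_le_left _ _
      linarith
    · have : (0:ℝ) < min (2 * T) ((k : ℝ) + 1)⁻¹ := lt_min (by linarith) hkpos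
      linarith
  have hallτ : ∀ s ∈ Icc (-T) τ, ρ s z ∈ Y := fun s hs =>
    hs.2.lt_or_eq.elim (fun h => hbelow s hs.1 h) (fun h => h ▸ hτY)
  have hy'G : ρ (τ - T) z ∈ Gset ρ T Y := by
    intro u hu
    have heq : ρ u (ρ (τ - T) z) = ρ (u + (τ - T)) z := (hρ.2.2 u (τ - T) z).symm
    rw [heq]
    exact subset_closure (hallτ _ ⟨by linarith [hu.1], by linarith [hu.2]⟩)
  have hρTy' : ρ T (ρ (τ - T) z) = ρ τ z := by
    rw [← hρ.2.2]; congr 1; ring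
  have hτint : ρ τ z ∈ interior Y := by
    by_contra hni
    have hfr : ρ τ z ∈ frontier Y := by rw [hY.frontier_eq]; exact ⟨hτY, hni⟩
    have hmem : ρ (τ - T) z ∈ GammaSet ρ T Y :=
      ⟨hy'G, T, ⟨hT.le, le_refl T⟩, by rw [hρTy']; exact hfr⟩
    rw [hΓ] at hmem
    exact hmem
  have hopen : IsOpen ((fun s => ρ s z) ⁻¹' interior Y) :=
    isOpen_interior.preimage (flow_cont_right hρ z)
  obtain ⟨η, hη, hball⟩ := Metric.isOpen_iff.mp hopen τ hτint
  obtain ⟨b, hbBad, hbτ⟩ := Real.lt_sInf_add_pos hne (half_pos hη)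
  have hτb : τ ≤ b := csInf_le hbdd hbBad
  have hbmem : b ∈ Metric.ball τ η := by
    rw [Metric.mem_ball, Real.dist_eq, abs_of_nonneg (by linarith)]
    rw [← hτdef] at hbτ
    linarith
  exact hbBad.2 (interior_subset (hball hbmem))

end Aux

/-- Theorem 3 (finite-dimensional continuation): under closeness of `π_n` to the product
flow `π` on `N = ℝ × B`, the maximal invariant set `A_{π_n}(N)` is a nonempty isolated
invariant set with nonempty compact `t`-slices, and some `ε`-neighborhood of it
(with `ε` depending only on `π₀`, `B`, `T` and `δ`) lies in `G^T_{π_n}(N)`. -/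
theorem stmt9 {X : Type*} [MetricSpace X] [LocallyCompactSpace X]
    (π₀ : ℝ → X → X) (hπ₀ : IsFlow π₀) (B : Set X) (hBcpt : IsCompact B)
    (hB : IsStableIsolatingBlock π₀ B)
    (πn : ℕ → ℝ → ℝ × X → ℝ × X) (hflow : ∀ n, IsFlow (πn n))
    (hskew : ∀ n, IsSkewFlow (πn n)) (hss : SemiSingConv πn π₀)
    (T δ : ℝ) (hT : 0 < T) (hδ : 0 < δ)
    (hcpt : IsCompact (closure (Metric.thickening δ B)))
    (h1 : Metric.thickening δ (Gset (prodFlow π₀) (2 * T) ((Set.univ : Set ℝ) ×ˢ B)) ⊆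
      Gset (prodFlow π₀) T ((Set.univ : Set ℝ) ×ˢ B))
    (h2 : Metric.thickening δ (Gset (prodFlow π₀) T ((Set.univ : Set ℝ) ×ˢ B)) ⊆
      (Set.univ : Set ℝ) ×ˢ B)
    (h3 : Metric.thickening δ
        (Gset (prodFlow π₀) T (Metric.thickening δ ((Set.univ : Set ℝ) ×ˢ B))) ⊆
      (Set.univ : Set ℝ) ×ˢ B) :
    ∃ ε > (0:ℝ), ∀ n : ℕ,
      GammaSet (πn n) T ((Set.univ : Set ℝ) ×ˢ B) = ∅ →
      (Gset (πn n) T ((Set.univ : Set ℝ) ×ˢ B)).Nonempty →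
      (∀ z ∈ (Set.univ : Set ℝ) ×ˢ closure (Metric.thickening δ B),
        ∀ t ∈ Set.Icc (-T) T, dist (πn n t z) (prodFlow π₀ t z) < δ / 3) →
      (Ainv (πn n) ((Set.univ : Set ℝ) ×ˢ B)).Nonempty ∧
      Ainv (πn n) ((Set.univ : Set ℝ) ×ˢ B) ⊆ interior ((Set.univ : Set ℝ) ×ˢ B) ∧
      Ainv (πn n) ((Set.univ : Set ℝ) ×ˢ B) =
        Ainv (πn n) (Ainv (πn n) ((Set.univ : Set ℝ) ×ˢ B)) ∧
      (∀ t : ℝ,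
        (Ainv (πn n) ((Set.univ : Set ℝ) ×ˢ B) ∩ ({t} : Set ℝ) ×ˢ (Set.univ : Set X)).Nonempty ∧
        IsCompact (Ainv (πn n) ((Set.univ : Set ℝ) ×ˢ B) ∩ ({t} : Set ℝ) ×ˢ (Set.univ : Set X))) ∧
      Metric.thickening ε (Ainv (πn n) ((Set.univ : Set ℝ) ×ˢ B)) ⊆
        Gset (πn n) T ((Set.univ : Set ℝ) ×ˢ B) := by
  have hBcl : IsClosed B := hBcpt.isClosed
  set N : Set (ℝ × X) := (Set.univ : Set ℝ) ×ˢ B with hNdef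
  have hN : IsClosed N := isClosed_univ.prod hBcl
  have hπflow : IsFlow (prodFlow π₀) := prodFlow_isFlow hπ₀
  have hK : IsCompact ((Icc (-T) T) ×ˢ closure (thickening δ B)) := isCompact_Icc.prod hcpt
  have hUC : UniformContinuousOn (fun p : ℝ × X => π₀ p.1 p.2)
      ((Icc (-T) T) ×ˢ closure (thickening δ B)) :=
    hK.uniformContinuousOn_of_continuous hπ₀.1.continuousOn
  rw [Metric.uniformContinuousOn_iff] at hUC
  obtain ⟨ε₀, hε₀, hUC⟩ := hUC (δ/3) (by linarith)
  refine ⟨min ε₀ (δ/3), lt_min hε₀ (by linarith), ?_⟩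
  intro n hGam hGne hclose
  have hfl := hflow n
  have hGsubN : Gset (πn n) T N ⊆ N := Gset_subset' hfl hN hT.le
  have hfw : ∀ z ∈ Gset (πn n) T N, ∀ t, -T ≤ t → πn n t z ∈ N :=
    fun z hz => forward_in hfl hN hT hGam hz
  -- a full π₀-orbit point in B
  obtain ⟨z₀, hz₀⟩ := hGne
  have hz₀B : z₀.2 ∈ B := (hGsubN hz₀).2
  have hBplus : ∀ x ∈ B, ∀ s : ℝ, 0 ≤ s → π₀ s x ∈ B := by
    intro x hx s hs
    rw [← hB.2.2.1] at hx
    exact hx.2 s hs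
  have hseq : ∀ k : ℕ, π₀ (k : ℝ) z₀.2 ∈ B := fun k => hBplus _ hz₀B _ (Nat.cast_nonneg k)
  obtain ⟨xs, hxsB, φ, hφ, hconv⟩ := hBcpt.tendsto_subseq hseq
  have hxsfull : ∀ t : ℝ, π₀ t xs ∈ B := by
    intro t
    have htend : Tendsto (fun k => π₀ t (π₀ ((φ k : ℕ) : ℝ) z₀.2)) atTop (𝓝 (π₀ t xs)) :=
      ((flow_cont_left hπ₀ t).tendsto xs).comp hconv
    refine hBcl.mem_of_tendsto htend ?_
    filter_upwards [eventually_ge_atTop ⌈(-t)⌉₊] with k hk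
    rw [← hπ₀.2.2]
    refine hBplus _ hz₀B _ ?_
    have h1' : ((⌈(-t)⌉₊ : ℕ) : ℝ) ≤ ((φ k : ℕ) : ℝ) := by
      exact_mod_cast le_trans hk hφ.le_apply
    have h2' : -t ≤ ((⌈(-t)⌉₊ : ℕ) : ℝ) := Nat.le_ceil _
    linarith
  -- every slice of G^T_{π_n}(N) is nonempty
  have hGslice : ∀ s : ℝ, (s, xs) ∈ Gset (πn n) T N := by
    intro s
    simp only [Gset, mem_setOf_eq]
    intro t ht
    refine subset_closure ?_
    have hdom : (s, xs) ∈ (Set.univ : Set ℝ) ×ˢ closure (thickening δ B) :=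
      ⟨mem_univ _, subset_closure (Metric.self_subset_thickening hδ _ hxsB)⟩
    have hd := hclose (s, xs) hdom t ht
    have hG2T : prodFlow π₀ t (s, xs) ∈ Gset (prodFlow π₀) (2 * T) N := by
      simp only [Gset, mem_setOf_eq]
      intro u hu
      refine subset_closure ?_
      show prodFlow π₀ u (prodFlow π₀ t (s, xs)) ∈ N
      rw [← hπflow.2.2]
      exact ⟨mem_univ _, hxsfull (u + t)⟩
    have hthick : πn n t (s, xs) ∈ thickening δ (Gset (prodFlow π₀) (2 * T) N) :=
      Metric.mem_thickening_iff.mpr ⟨_, hG2T, lt_trans hd (by linarith)⟩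
    exact Gset_subset' hπflow hN hT.le (h1 hthick)
  -- the nested compact sets E m
  set E : ℕ → Set X := fun m => {x | ∀ t ∈ Icc (-(m:ℝ)) (m:ℝ), πn n t (0, x) ∈ N} with hE
  have hEeq : ∀ m, E m = ⋂ t ∈ Icc (-(m:ℝ)) (m:ℝ), (fun x => πn n t ((0:ℝ), x)) ⁻¹' N := by
    intro m; ext x
    simp only [hE, mem_setOf_eq, mem_iInter, mem_preimage]
  have hEcl : ∀ m, IsClosed (E m) := by
    intro m
    rw [hEeq]
    exact isClosed_biInter fun t _ => hN.preimage
      (hfl.1.comp (continuous_const.prodMk (continuous_const.prodMk continuous_id)))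
  have hEB : ∀ m, E m ⊆ B := by
    intro m x hx
    have h0 := hx 0 ⟨neg_nonpos.mpr (Nat.cast_nonneg m), Nat.cast_nonneg m⟩
    rw [hfl.2.1] at h0
    exact h0.2
  have hEmono : ∀ m, E (m+1) ⊆ E m := by
    intro m x hx t ht
    refine hx t ⟨?_, ?_⟩ <;> push_cast <;> [linarith [ht.1]; linarith [ht.2]]
  have hEne : ∀ m, (E m).Nonempty := by
    intro m
    have hw := hGslice (-(m:ℝ))
    have hu1 : (πn n (m:ℝ) ((-(m:ℝ)), xs)).1 = 0 := by rw [hskew n]; ring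
    refine ⟨(πn n (m:ℝ) ((-(m:ℝ)), xs)).2, ?_⟩
    intro t ht
    have heq : ((0:ℝ), (πn n (m:ℝ) ((-(m:ℝ)), xs)).2) = πn n (m:ℝ) ((-(m:ℝ)), xs) :=
      Prod.ext_iff.mpr ⟨hu1.symm, rfl⟩
    show πn n t ((0:ℝ), (πn n (m:ℝ) ((-(m:ℝ)), xs)).2) ∈ N
    rw [heq, ← hfl.2.2]
    exact hfw _ hw (t + m) (by have := ht.1; linarith)
  have hiInter := IsCompact.nonempty_iInter_of_sequence_nonempty_isCompact_isClosed E
    hEmono hEne (hBcpt.of_isClosed_subset (hEcl 0) (hEB 0)) hEcl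
  obtain ⟨xI, hxI⟩ := hiInter
  rw [mem_iInter] at hxI
  have hzfull : ∀ r : ℝ, πn n r ((0:ℝ), xI) ∈ N := by
    intro r
    refine hxI ⌈|r|⌉₊ r ⟨?_, ?_⟩
    · have h1' := Nat.le_ceil |r|
      have h2' := neg_abs_le r
      linarith
    · have h1' := Nat.le_ceil |r|
      have h2' := le_abs_self r
      linarith
  have hzA : ((0:ℝ), xI) ∈ Ainv (πn n) N := by
    have h0 : ((0:ℝ), xI) ∈ N := by have := hzfull 0; rwa [hfl.2.1] at this
    exact ⟨⟨h0, fun t _ => hzfull t⟩, ⟨h0, fun t _ => hzfull (-t)⟩⟩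
  refine ⟨⟨_, hzA⟩, ?_, ?_, ?_, ?_⟩
  · -- Ainv ⊆ interior N
    intro z hz
    have hzN : z ∈ N := hz.1.1
    by_contra hni
    have hfr : z ∈ frontier N := by rw [hN.frontier_eq]; exact ⟨hzN, hni⟩
    have hzG : z ∈ Gset (πn n) T N := by
      simp only [Gset, mem_setOf_eq]
      intro t _
      exact subset_closure (Ainv_orbit hfl hz t)
    have hmem : z ∈ GammaSet (πn n) T N :=
      ⟨hzG, 0, ⟨le_refl 0, hT.le⟩, by rw [hfl.2.1]; exact hfr⟩
    rw [hGam] at hmem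
    exact hmem
  · -- Ainv = Ainv (Ainv)
    ext z
    constructor
    · intro hz
      have hsh : ∀ r : ℝ, πn n r z ∈ Ainv (πn n) N := Ainv_shift hfl hz
      exact ⟨⟨hz, fun t _ => hsh t⟩, ⟨hz, fun t _ => hsh (-t)⟩⟩
    · exact fun hz => hz.1.1
  · -- slices
    intro t
    constructor
    · refine ⟨πn n t ((0:ℝ), xI), Ainv_shift hfl hzA t, ?_, mem_univ _⟩
      show (πn n t ((0:ℝ), xI)).1 ∈ ({t} : Set ℝ)
      rw [hskew n]
      simp
    · refine IsCompact.of_isClosed_subset ((isCompact_singleton : IsCompact ({t} : Set ℝ)).prod hBcpt)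
        ((isClosed_Ainv hfl hN).inter ((isClosed_singleton).prod isClosed_univ)) ?_
      rintro ⟨a, x⟩ ⟨hA, hs⟩
      exact ⟨hs.1, hA.1.1.2⟩
  · -- thickening ε ⊆ G^T
    intro z hz
    obtain ⟨w, hwA, hdzw⟩ := Metric.mem_thickening_iff.mp hz
    have hεle₀ : min ε₀ (δ/3) ≤ ε₀ := min_le_left _ _
    have hεleδ : min ε₀ (δ/3) ≤ δ/3 := min_le_right _ _
    have hwN : w ∈ N := hwA.1.1
    have hwdom : w ∈ (Set.univ : Set ℝ) ×ˢ closure (thickening δ B) :=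
      ⟨mem_univ _, subset_closure (Metric.self_subset_thickening hδ _ hwN.2)⟩
    have hzdom : z ∈ (Set.univ : Set ℝ) ×ˢ closure (thickening δ B) := by
      refine ⟨mem_univ _, subset_closure (Metric.mem_thickening_iff.mpr ⟨w.2, hwN.2, ?_⟩)⟩
      calc dist z.2 w.2 ≤ dist z w := by rw [Prod.dist_eq]; exact le_max_right _ _
        _ < δ := lt_of_lt_of_le hdzw (le_trans hεleδ (by linarith))
    simp only [Gset, mem_setOf_eq]
    intro t ht
    refine subset_closure ?_
    have hd1 := hclose z hzdom t ht
    have hd2 := hclose w hwdom t ht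
    have hd3 : dist (prodFlow π₀ t z) (prodFlow π₀ t w) < δ/3 := by
      rw [Prod.dist_eq]
      refine max_lt ?_ ?_
      · show dist (z.1 + t) (w.1 + t) < δ/3
        rw [dist_add_right]
        calc dist z.1 w.1 ≤ dist z w := by rw [Prod.dist_eq]; exact le_max_left _ _
          _ < δ/3 := lt_of_lt_of_le hdzw hεleδ
      · refine hUC (t, z.2) ⟨ht, hzdom.2⟩ (t, w.2) ⟨ht, hwdom.2⟩ ?_
        rw [Prod.dist_eq, dist_self, max_eq_right dist_nonneg]
        calc dist z.2 w.2 ≤ dist z w := by rw [Prod.dist_eq]; exact le_max_right _ _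
          _ < ε₀ := lt_of_lt_of_le hdzw hεle₀
    have hd2' : dist (prodFlow π₀ t w) (πn n t w) < δ/3 := by rw [dist_comm]; exact hd2
    have hdist : dist (πn n t z) (πn n t w) < δ := by
      calc dist (πn n t z) (πn n t w) ≤ dist (πn n t z) (prodFlow π₀ t z) +
            dist (prodFlow π₀ t z) (prodFlow π₀ t w) +
            dist (prodFlow π₀ t w) (πn n t w) := dist_triangle4 _ _ _ _
        _ < δ := by linarith
    have hw'G : πn n t w ∈ Gset (prodFlow π₀) T (thickening δ N) := by
      simp only [Gset, mem_setOf_eq]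
      intro s hs
      have hw'N : πn n t w ∈ N := Ainv_orbit hfl hwA t
      have hw'dom : πn n t w ∈ (Set.univ : Set ℝ) ×ˢ closure (thickening δ B) :=
        ⟨mem_univ _, subset_closure (Metric.self_subset_thickening hδ _ hw'N.2)⟩
      have hc := hclose (πn n t w) hw'dom s hs
      have hsN : πn n s (πn n t w) ∈ N := by
        rw [← hfl.2.2]
        exact Ainv_orbit hfl hwA (s + t)
      refine subset_closure (Metric.mem_thickening_iff.mpr ⟨πn n s (πn n t w), hsN, ?_⟩)
      rw [dist_comm]
      exact lt_trans hc (by linarith)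
    exact h3 (Metric.mem_thickening_iff.mpr ⟨πn n t w, hw'G, hdist⟩)
end

section
/- Let π₀ be a flow on a locally compact metric space X, B ⊆ X closed, N = ℝ × B, π the product flow on ℝ × X, and π_n a skew product flow on ℝ × X. Let T > 0 and δ > 0 be such that U_δ(G^T_π(N)) ⊆ N, and suppose d(xπ_n t, xπt) < δ for all t ∈ [−T,T] and x ∈ N. Then G^{2T}_π(N) ⊆ G^T_{π_n}(N). -/
open Set Metric Filter Topology

/-- If `U_δ(G^T_π(N)) ⊆ N` and `π_n` is `δ`-close to `π` on `N` for times in `[−T,T]`,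
then `G^{2T}_π(N) ⊆ G^T_{π_n}(N)`. -/
theorem stmt11 {X : Type*} [MetricSpace X] [LocallyCompactSpace X]
    (π₀ : ℝ → X → X) (hπ₀ : IsFlow π₀) (B : Set X) (hBclosed : IsClosed B)
    (πn : ℝ → ℝ × X → ℝ × X) (hflow : IsFlow πn) (hskew : IsSkewFlow πn)
    (T δ : ℝ) (hT : 0 < T) (hδ : 0 < δ)
    (h : Metric.thickening δ (Gset (prodFlow π₀) T ((Set.univ : Set ℝ) ×ˢ B)) ⊆
      (Set.univ : Set ℝ) ×ˢ B)
    (hclose : ∀ x ∈ (Set.univ : Set ℝ) ×ˢ B, ∀ t ∈ Set.Icc (-T) T,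
      dist (πn t x) (prodFlow π₀ t x) < δ) :
    Gset (prodFlow π₀) (2 * T) ((Set.univ : Set ℝ) ×ˢ B) ⊆
      Gset πn T ((Set.univ : Set ℝ) ×ˢ B) := by
  intro z hz
  have hNclosed : IsClosed ((Set.univ : Set ℝ) ×ˢ B) := isClosed_univ.prod hBclosed
  have hzN : z ∈ (Set.univ : Set ℝ) ×ˢ B := by
    have := hz 0 ⟨by linarith, by linarith⟩
    rw [hNclosed.closure_eq] at this
    simpa [prodFlow, hπ₀.2.1] using this
  intro t ht
  have hmem : prodFlow π₀ t z ∈ Gset (prodFlow π₀) T ((Set.univ : Set ℝ) ×ˢ B) := by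
    intro s hs
    have : prodFlow π₀ s (prodFlow π₀ t z) = prodFlow π₀ (s + t) z := by
      simp [prodFlow, (hπ₀.2.2 s t z.2).symm]; ring
    rw [this]
    exact hz (s + t) ⟨by cases hs; cases ht; linarith, by cases hs; cases ht; linarith⟩
  have hd : dist (πn t z) (prodFlow π₀ t z) < δ := hclose z hzN t ht
  have : πn t z ∈ Metric.thickening δ (Gset (prodFlow π₀) T ((Set.univ : Set ℝ) ×ˢ B)) :=
    Metric.mem_thickening_iff.mpr ⟨_, hmem, hd⟩
  exact subset_closure (h this)
end

section
/- Let π₀ be a flow on a locally compact metric space X, B ⊆ X compact, N = ℝ × B, π the product flow on ℝ × X, and π_n a skew product flow on ℝ × X. Let T > 0 and δ > 0 be such that cl U_δ(B) is compact, U_δ(G^T_{π_n}(N)) ⊆ N, and d(xπ_n t, xπt) < δ/3 for all t ∈ [−T,T] and x ∈ ℝ × cl U_δ(B). Then there exists ε > 0, depending only on π₀, B, T and δ, such that U_ε(G^{2T}_{π_n}(N)) ⊆ G^T_{π_n}(N). -/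
open Set Metric Filter Topology

/-- If `cl U_δ(B)` is compact, `U_δ(G^T_{π_n}(N)) ⊆ N` and `π_n` is `δ/3`-close to the
product flow `π` on `ℝ × cl U_δ(B)` for times in `[−T,T]`, then there is `ε > 0`
(depending only on `π₀`, `B`, `T` and `δ`) with `U_ε(G^{2T}_{π_n}(N)) ⊆ G^T_{π_n}(N)`. -/
theorem stmt12 {X : Type*} [MetricSpace X] [LocallyCompactSpace X]
    (π₀ : ℝ → X → X) (hπ₀ : IsFlow π₀) (B : Set X) (hBcpt : IsCompact B)
    (T δ : ℝ) (hT : 0 < T) (hδ : 0 < δ)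
    (hcpt : IsCompact (closure (Metric.thickening δ B))) :
    ∃ ε > (0:ℝ), ∀ πn : ℝ → ℝ × X → ℝ × X, IsFlow πn → IsSkewFlow πn →
      Metric.thickening δ (Gset πn T ((Set.univ : Set ℝ) ×ˢ B)) ⊆
        (Set.univ : Set ℝ) ×ˢ B →
      (∀ x ∈ (Set.univ : Set ℝ) ×ˢ closure (Metric.thickening δ B),
        ∀ t ∈ Set.Icc (-T) T, dist (πn t x) (prodFlow π₀ t x) < δ / 3) →
      Metric.thickening ε (Gset πn (2 * T) ((Set.univ : Set ℝ) ×ˢ B)) ⊆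
        Gset πn T ((Set.univ : Set ℝ) ×ˢ B) := by
  obtain ⟨hcont, hzero, hadd⟩ := hπ₀
  set K := closure (Metric.thickening δ B) with hK
  have hScpt : IsCompact ((Set.Icc (-T) T) ×ˢ K) := isCompact_Icc.prod hcpt
  have hucont : UniformContinuousOn (fun p : ℝ × X => π₀ p.1 p.2)
      ((Set.Icc (-T) T) ×ˢ K) :=
    hScpt.uniformContinuousOn_of_continuous hcont.continuousOn
  rw [Metric.uniformContinuousOn_iff] at hucont
  obtain ⟨ε₀, hε₀, hε⟩ := hucont (δ / 3) (by linarith)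
  refine ⟨min ε₀ δ, lt_min hε₀ hδ, ?_⟩
  intro πn hπn hskew hδsub hclose z hz
  rw [Metric.mem_thickening_iff] at hz
  obtain ⟨y, hyG, hzy⟩ := hz
  have hBclosed : IsClosed B := hBcpt.isClosed
  have hNclosed : IsClosed ((Set.univ : Set ℝ) ×ˢ B) := isClosed_univ.prod hBclosed
  have hyN : y ∈ (Set.univ : Set ℝ) ×ˢ B := by
    have h0 := hyG 0 ⟨by linarith, by linarith⟩
    rw [hπn.2.1 y, hNclosed.closure_eq] at h0
    exact h0
  have hsnd : ∀ a b : ℝ × X, dist a.2 b.2 ≤ dist a b := by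
    intro a b; rw [Prod.dist_eq]; exact le_max_right _ _
  have hy2B : y.2 ∈ B := hyN.2
  have hy2K : y.2 ∈ K := subset_closure (Metric.self_subset_thickening hδ B hy2B)
  have hz2K : z.2 ∈ K := by
    apply subset_closure
    rw [Metric.mem_thickening_iff]
    exact ⟨y.2, hy2B, lt_of_le_of_lt (hsnd z y) (lt_of_lt_of_le hzy (min_le_right _ _))⟩
  intro t ht
  -- πn t y stays in G^T
  have htyG : πn t y ∈ Gset πn T ((Set.univ : Set ℝ) ×ˢ B) := by
    intro s hs
    rw [← hπn.2.2 s t y]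
    exact hyG (s + t) ⟨by linarith [hs.1, ht.1], by linarith [hs.2, ht.2]⟩
  -- closeness of πn t z to πn t y
  have hd1 : dist (πn t z).1 (πn t y).1 < δ := by
    have h1 : (πn t z).1 = z.1 + t := hskew t z.1 z.2
    have h2 : (πn t y).1 = y.1 + t := hskew t y.1 y.2
    rw [h1, h2, Real.dist_eq, add_sub_add_right_eq_sub]
    calc |z.1 - y.1| = dist z.1 y.1 := (Real.dist_eq _ _).symm
      _ ≤ dist z y := by rw [Prod.dist_eq]; exact le_max_left _ _
      _ < min ε₀ δ := hzy
      _ ≤ δ := min_le_right _ _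
  have hcz : dist (πn t z) (prodFlow π₀ t z) < δ / 3 :=
    hclose z ⟨Set.mem_univ _, hz2K⟩ t ht
  have hcy : dist (πn t y) (prodFlow π₀ t y) < δ / 3 :=
    hclose y ⟨Set.mem_univ _, hy2K⟩ t ht
  have hmid : dist (π₀ t z.2) (π₀ t y.2) < δ / 3 := by
    have hdp : dist ((t, z.2) : ℝ × X) ((t, y.2) : ℝ × X) < ε₀ := by
      rw [Prod.dist_eq]
      have : dist t t = 0 := dist_self t
      rw [this]
      refine max_lt (by linarith) ?_
      exact lt_of_le_of_lt (hsnd z y) (lt_of_lt_of_le hzy (min_le_left _ _))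
    exact hε (t, z.2) ⟨ht, hz2K⟩ (t, y.2) ⟨ht, hy2K⟩ hdp
  have hd2 : dist (πn t z).2 (πn t y).2 < δ := by
    have e1 : dist (πn t z).2 (prodFlow π₀ t z).2 < δ / 3 :=
      lt_of_le_of_lt (hsnd _ _) hcz
    have e3 : dist (prodFlow π₀ t y).2 (πn t y).2 < δ / 3 := by
      rw [dist_comm]; exact lt_of_le_of_lt (hsnd _ _) hcy
    have e2 : dist (prodFlow π₀ t z).2 (prodFlow π₀ t y).2 < δ / 3 := hmid
    calc dist (πn t z).2 (πn t y).2
        ≤ dist (πn t z).2 (prodFlow π₀ t z).2 + dist (prodFlow π₀ t z).2 (prodFlow π₀ t y).2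
            + dist (prodFlow π₀ t y).2 (πn t y).2 := dist_triangle4 _ _ _ _
      _ < δ / 3 + δ / 3 + δ / 3 := by linarith
      _ = δ := by ring
  have hdist : dist (πn t z) (πn t y) < δ := by
    rw [Prod.dist_eq]; exact max_lt hd1 hd2
  have : πn t z ∈ Metric.thickening δ (Gset πn T ((Set.univ : Set ℝ) ×ˢ B)) :=
    Metric.mem_thickening_iff.2 ⟨πn t y, htyG, hdist⟩
  exact subset_closure (hδsub this)
end

section
/- Let X be a locally compact metric space, B ⊆ X compact, and π_n a skew product flow on ℝ × X. Let G ⊆ ℝ × B be closed and positively π_n-invariant (A⁺_{π_n}(G) = G), and suppose every slice G(t) := G ∩ ({t} × X) is nonempty. Then for every t ∈ ℝ the set A(t) := ⋂_{r ≥ 0} (G(t−r)π_n r) is nonempty and compact, the set A := ⋃_{t ∈ ℝ} A(t) is π_n-invariant, and A = A_{π_n}(G) is the maximal π_n-invariant subset of G; in particular A_{π_n}(G) ∩ ({t} × X) is nonempty and compact for every t ∈ ℝ. -/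
open Set Metric Filter Topology

/-- If `G ⊆ ℝ × B` (`B` compact) is closed, positively `π_n`-invariant, with all
`t`-slices nonempty, then each `A(t) = ⋂_{r ≥ 0} G(t−r)π_n r` is nonempty and compact,
`A = ⋃_t A(t)` is invariant and equals `A_{π_n}(G)`, the maximal invariant subset of `G`;
in particular all `t`-slices of `A_{π_n}(G)` are nonempty and compact. -/
theorem stmt13 {X : Type*} [MetricSpace X] [LocallyCompactSpace X]
    (B : Set X) (hBcpt : IsCompact B)
    (ρ : ℝ → ℝ × X → ℝ × X) (hflow : IsFlow ρ) (hskew : IsSkewFlow ρ)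
    (G : Set (ℝ × X)) (hGsub : G ⊆ (Set.univ : Set ℝ) ×ˢ B) (hGclosed : IsClosed G)
    (hGpos : Aplus ρ G = G)
    (hslice : ∀ t : ℝ, (G ∩ ({t} : Set ℝ) ×ˢ (Set.univ : Set X)).Nonempty) :
    (∀ t : ℝ,
      (⋂ r ∈ Set.Ici (0:ℝ), ρ r '' (G ∩ ({t - r} : Set ℝ) ×ˢ (Set.univ : Set X))).Nonempty ∧
      IsCompact (⋂ r ∈ Set.Ici (0:ℝ), ρ r '' (G ∩ ({t - r} : Set ℝ) ×ˢ (Set.univ : Set X)))) ∧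
    (⋃ t : ℝ, ⋂ r ∈ Set.Ici (0:ℝ), ρ r '' (G ∩ ({t - r} : Set ℝ) ×ˢ (Set.univ : Set X))) =
      Ainv ρ (⋃ t : ℝ, ⋂ r ∈ Set.Ici (0:ℝ),
        ρ r '' (G ∩ ({t - r} : Set ℝ) ×ˢ (Set.univ : Set X))) ∧
    (⋃ t : ℝ, ⋂ r ∈ Set.Ici (0:ℝ), ρ r '' (G ∩ ({t - r} : Set ℝ) ×ˢ (Set.univ : Set X))) =
      Ainv ρ G ∧
    (∀ S ⊆ G, S = Ainv ρ S → S ⊆ Ainv ρ G) ∧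
    ∀ t : ℝ, (Ainv ρ G ∩ ({t} : Set ℝ) ×ˢ (Set.univ : Set X)).Nonempty ∧
      IsCompact (Ainv ρ G ∩ ({t} : Set ℝ) ×ˢ (Set.univ : Set X)) := by
  obtain ⟨hcont, hzero, hadd⟩ := hflow
  have hρc : ∀ r : ℝ, Continuous (ρ r) :=
    fun r => hcont.comp (continuous_const.prodMk continuous_id)
  have hcomp : ∀ (r s : ℝ) (z : ℝ × X), ρ r (ρ s z) = ρ (r + s) z :=
    fun r s z => (hadd r s z).symm
  have hinv : ∀ (r : ℝ) (z : ℝ × X), ρ (-r) (ρ r z) = z := by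
    intro r z; rw [hcomp, neg_add_cancel, hzero]
  have hinv' : ∀ (r : ℝ) (z : ℝ × X), ρ r (ρ (-r) z) = z := by
    intro r z; rw [hcomp, add_neg_cancel, hzero]
  have hsk : ∀ (t : ℝ) (z : ℝ × X), (ρ t z).1 = z.1 + t := fun t z => hskew t z.1 z.2
  have hpos : ∀ z ∈ G, ∀ t : ℝ, 0 ≤ t → ρ t z ∈ G := by
    intro z hz t ht
    rw [← hGpos] at hz
    exact hz.2 t ht
  -- characterization of A(t)
  have hchar : ∀ (t : ℝ) (z : ℝ × X),
      z ∈ (⋂ r ∈ Set.Ici (0:ℝ), ρ r '' (G ∩ ({t - r} : Set ℝ) ×ˢ (Set.univ : Set X))) ↔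
      (z.1 = t ∧ ∀ r : ℝ, 0 ≤ r → ρ (-r) z ∈ G) := by
    intro t z
    simp only [Set.mem_iInter, Set.mem_Ici]
    constructor
    · intro h
      have h0 := h 0 le_rfl
      obtain ⟨w, ⟨hwG, hw1, -⟩, hwz⟩ := h0
      have hz1 : z.1 = t := by
        rw [← hwz, hzero]
        simpa using hw1
      refine ⟨hz1, fun r hr => ?_⟩
      obtain ⟨w, ⟨hwG, -⟩, hwz⟩ := h r hr
      rw [← hwz, hinv]; exact hwG
    · rintro ⟨hz1, hG⟩ r hr
      refine ⟨ρ (-r) z, ⟨hG r hr, ?_, trivial⟩, hinv' r z⟩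
      have h1 := hsk (-r) z
      simp only [Set.mem_singleton_iff]
      rw [h1, hz1]; ring
  have hzG_of : ∀ z : ℝ × X, (∀ r : ℝ, 0 ≤ r → ρ (-r) z ∈ G) → z ∈ G := by
    intro z h
    have := h 0 le_rfl
    rwa [neg_zero, hzero] at this
  -- compactness and nonemptiness of the pieces
  have hKcpt : ∀ t r : ℝ, IsCompact (ρ r '' (G ∩ ({t - r} : Set ℝ) ×ˢ (Set.univ : Set X))) := by
    intro t r
    refine IsCompact.image ?_ (hρc r)
    refine IsCompact.of_isClosed_subset ((isCompact_singleton : IsCompact ({t - r} : Set ℝ)).prod hBcpt)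
      (hGclosed.inter (isClosed_singleton.prod isClosed_univ)) ?_
    rintro z ⟨hzG, hz1, -⟩
    exact ⟨hz1, (hGsub hzG).2⟩
  have hKne : ∀ t r : ℝ, (ρ r '' (G ∩ ({t - r} : Set ℝ) ×ˢ (Set.univ : Set X))).Nonempty := by
    intro t r
    obtain ⟨z, hz⟩ := hslice (t - r)
    exact ⟨ρ r z, z, hz, rfl⟩
  have hKanti : ∀ (t r r' : ℝ), 0 ≤ r → r ≤ r' →
      ρ r' '' (G ∩ ({t - r'} : Set ℝ) ×ˢ (Set.univ : Set X)) ⊆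
      ρ r '' (G ∩ ({t - r} : Set ℝ) ×ˢ (Set.univ : Set X)) := by
    rintro t r r' hr hrr' z ⟨w, ⟨hwG, hw1, -⟩, hwz⟩
    simp only [Set.mem_singleton_iff] at hw1
    refine ⟨ρ (r' - r) w, ⟨hpos w hwG _ (by linarith), ?_, trivial⟩, ?_⟩
    · have h1 := hsk (r' - r) w
      simp only [Set.mem_singleton_iff]
      rw [h1, hw1]; ring
    · rw [hcomp]
      have : r + (r' - r) = r' := by ring
      rw [this]; exact hwz
  have hAne : ∀ t : ℝ,
      (⋂ r ∈ Set.Ici (0:ℝ), ρ r '' (G ∩ ({t - r} : Set ℝ) ×ˢ (Set.univ : Set X))).Nonempty := by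
    intro t
    rw [Set.biInter_eq_iInter]
    haveI : Nonempty (Set.Ici (0:ℝ)) := ⟨⟨0, Set.mem_Ici.2 le_rfl⟩⟩
    apply IsCompact.nonempty_iInter_of_directed_nonempty_isCompact_isClosed
    · rintro ⟨r, hr⟩ ⟨r', hr'⟩
      exact ⟨⟨max r r', Set.mem_Ici.2 (le_trans (Set.mem_Ici.1 hr) (le_max_left _ _))⟩,
        hKanti t r _ hr (le_max_left _ _), hKanti t r' _ hr' (le_max_right _ _)⟩
    · exact fun r => hKne t r
    · exact fun r => hKcpt t r
    · exact fun r => (hKcpt t r).isClosed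
  have hAcpt : ∀ t : ℝ,
      IsCompact (⋂ r ∈ Set.Ici (0:ℝ), ρ r '' (G ∩ ({t - r} : Set ℝ) ×ˢ (Set.univ : Set X))) := by
    intro t
    refine IsCompact.of_isClosed_subset (hKcpt t 0)
      (isClosed_biInter fun r _ => (hKcpt t r).isClosed) ?_
    intro z hz
    have := (Set.mem_iInter₂.1 hz) 0 (Set.mem_Ici.2 le_rfl)
    simpa using this
  -- A = Ainv ρ G
  have hAeq : (⋃ t : ℝ, ⋂ r ∈ Set.Ici (0:ℝ),
      ρ r '' (G ∩ ({t - r} : Set ℝ) ×ˢ (Set.univ : Set X))) = Ainv ρ G := by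
    ext z
    simp only [Set.mem_iUnion]
    constructor
    · rintro ⟨t, hz⟩
      obtain ⟨hz1, hb⟩ := (hchar t z).1 hz
      have hzG : z ∈ G := hzG_of z hb
      exact ⟨⟨hzG, fun s hs => hpos z hzG s hs⟩, ⟨hzG, hb⟩⟩
    · rintro ⟨-, -, hb⟩
      exact ⟨z.1, (hchar z.1 z).2 ⟨rfl, hb⟩⟩
  have horbit : ∀ z ∈ Ainv ρ G, ∀ s : ℝ, ρ s z ∈ G := by
    rintro z ⟨⟨hzG, hf⟩, -, hb⟩ s
    rcases le_or_gt 0 s with h | h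
    · exact hf s h
    · have := hb (-s) (by linarith)
      rwa [neg_neg] at this
  have hAinv2 : Ainv ρ G = Ainv ρ (Ainv ρ G) := by
    refine Set.Subset.antisymm ?_ (fun z hz => hz.1.1)
    intro z hz
    have key : ∀ s : ℝ, ρ s z ∈ Ainv ρ G := by
      intro s
      have hG' : ∀ u : ℝ, ρ u (ρ s z) ∈ G := by
        intro u; rw [hcomp]; exact horbit z hz _
      exact ⟨⟨horbit z hz s, fun u _ => hG' u⟩, horbit z hz s, fun u _ => hG' (-u)⟩
    exact ⟨⟨hz, fun u _ => key u⟩, hz, fun u _ => key (-u)⟩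
  refine ⟨fun t => ⟨hAne t, hAcpt t⟩, by rw [hAeq, ← hAinv2], hAeq, ?_, ?_⟩
  · intro S hSG hSinv z hz
    rw [hSinv] at hz
    exact ⟨⟨hSG hz.1.1, fun u hu => hSG (hz.1.2 u hu)⟩,
      hSG hz.2.1, fun u hu => hSG (hz.2.2 u hu)⟩
  · intro t
    have hse : Ainv ρ G ∩ ({t} : Set ℝ) ×ˢ (Set.univ : Set X) =
        ⋂ r ∈ Set.Ici (0:ℝ), ρ r '' (G ∩ ({t - r} : Set ℝ) ×ˢ (Set.univ : Set X)) := by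
      ext z
      rw [hchar]
      constructor
      · rintro ⟨⟨-, -, hb⟩, hz1, -⟩
        exact ⟨hz1, hb⟩
      · rintro ⟨hz1, hb⟩
        have hzG : z ∈ G := hzG_of z hb
        exact ⟨⟨⟨hzG, fun s hs => hpos z hzG s hs⟩, hzG, hb⟩, hz1, trivial⟩
    rw [hse]
    exact ⟨hAne t, hAcpt t⟩
end

section
/- Let (φ,θ) be a two-sided process over a base set P on a locally compact metric space X, let π₀ be a flow on X with compact stable isolating block B and A_{π₀}(B) ≠ ∅, and let π be the product flow of π₀ on ℝ × X. Let P* ⊆ P contain exactly one representative of each θ-orbit, and for p ∈ P let π_p be the associated skew product flow. Suppose there are constants T, δ, ε > 0 such that for every p ∈ P*: Γ^T_{π_p}(ℝ × B) = ∅, G^T_{π_p}(ℝ × B) ≠ ∅, cl U_δ(B) is compact, U_δ(G^{2T}_π(ℝ × B)) ⊆ G^T_π(ℝ × B), U_δ(G^T_π(ℝ × B)) ⊆ ℝ × B, U_δ(G^T_π(U_δ(ℝ × B))) ⊆ ℝ × B, d((s,x)πt, (s,x)π_p t) < δ/3 for all t ∈ [−T,T] and (s,x) ∈ ℝ × cl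 U_δ(B), and U_ε(A_{π_p}(ℝ × B)) ⊆ G_p := G^T_{π_p}(ℝ × B). Define D(q) = {x ∈ X : ∃ s ∈ ℝ, p ∈ P* with pθs = q and (s,x) ∈ G_p} and A(q) = {x ∈ X : ∃ s ∈ ℝ, p ∈ P* with pθs = q and (s,x) ∈ A_{π_p}(ℝ × B)} for q ∈ P. Then each D(q) is closed and D is forward invariant (x ∈ D(q) and t ≥ 0 imply xφ^q t ∈ D(qθt)), the map A is invariant (A(q)φ^q t = A(qθt) for all t ≥ 0), each A(q) is nonempty and compact, and U_ε(A(q)) ⊆ D(q) for all q ∈ P. -/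
open Set Metric Filter Topology

/-- A two-sided process `(φ,θ)` over a base set `P` on a metric space `X`:
`θ` is a (not necessarily continuous) flow on `P` and `φ` is a cocycle over `θ`,
continuous in `(t,x)` for each fixed `p`. -/
structure TwoSidedProcess (P : Type*) (X : Type*) [MetricSpace X] where
  θ : ℝ → P → P
  φ : ℝ → P → X → X
  θ_zero : ∀ p, θ 0 p = p
  θ_add : ∀ (t s : ℝ) (p : P), θ (t + s) p = θ t (θ s p)
  φ_cont : ∀ p : P, Continuous fun q : ℝ × X => φ q.1 p q.2
  φ_zero : ∀ (p : P) (x : X), φ 0 p x = x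
  φ_add : ∀ (t s : ℝ) (p : P) (x : X), φ (t + s) p x = φ t (θ s p) (φ s p x)

/-- The skew product flow `π_p` associated to a process: `(s,x)π_p t = (s+t, xφ^{pθs}t)`. -/
def procSkew {P X : Type*} [MetricSpace X] (pr : TwoSidedProcess P X) (p : P) :
    ℝ → ℝ × X → ℝ × X :=
  fun t q => (q.1 + t, pr.φ t (pr.θ q.1 p) q.2)

/-- The set `D(q)` built from the stable neighborhoods `G_p = G^T_{π_p}(ℝ × B)`. -/
def Dset {P X : Type*} [MetricSpace X] (pr : TwoSidedProcess P X) (Pstar : Set P)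
    (T : ℝ) (B : Set X) (q : P) : Set X :=
  {x : X | ∃ s : ℝ, ∃ p ∈ Pstar, pr.θ s p = q ∧
    (s, x) ∈ Gset (procSkew pr p) T ((Set.univ : Set ℝ) ×ˢ B)}

/-- The set `A(q)` built from the invariant sets `A_{π_p}(ℝ × B)`. -/
def Aset {P X : Type*} [MetricSpace X] (pr : TwoSidedProcess P X) (Pstar : Set P)
    (B : Set X) (q : P) : Set X :=
  {x : X | ∃ s : ℝ, ∃ p ∈ Pstar, pr.θ s p = q ∧
    (s, x) ∈ Ainv (procSkew pr p) ((Set.univ : Set ℝ) ×ˢ B)}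

section Aux

variable {P X : Type*} [MetricSpace X] (pr : TwoSidedProcess P X)

lemma phi_cont' (q : P) (t : ℝ) : Continuous fun x : X => pr.φ t q x :=
  (pr.φ_cont q).comp (Continuous.prodMk_right t)

lemma phi_cont_t (q : P) (x : X) : Continuous fun t : ℝ => pr.φ t q x :=
  (pr.φ_cont q).comp (continuous_id.prodMk continuous_const)

lemma theta_cancel (t : ℝ) (q : P) : pr.θ t (pr.θ (-t) q) = q := by
  rw [← pr.θ_add]; simp [pr.θ_zero]

lemma theta_cancel' (t : ℝ) (q : P) : pr.θ (-t) (pr.θ t q) = q := by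
  rw [← pr.θ_add]; simp [pr.θ_zero]

lemma phi_shift (u r : ℝ) (q : P) (x : X) :
    pr.φ u (pr.θ r q) (pr.φ r q x) = pr.φ (u + r) q x := (pr.φ_add u r q x).symm

lemma mem_Gset_prod {B : Set X} (hBc : IsClosed B) (T : ℝ) (p : P) (s : ℝ) (x : X) :
    (s, x) ∈ Gset (procSkew pr p) T ((Set.univ : Set ℝ) ×ˢ B) ↔
      ∀ t ∈ Set.Icc (-T) T, pr.φ t (pr.θ s p) x ∈ B := by
  simp [Gset, procSkew, closure_prod_eq, hBc.closure_eq]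

lemma mem_Ainv_prod {B : Set X} (p : P) (s : ℝ) (x : X) :
    (s, x) ∈ Ainv (procSkew pr p) ((Set.univ : Set ℝ) ×ˢ B) ↔
      ∀ t : ℝ, pr.φ t (pr.θ s p) x ∈ B := by
  constructor
  · rintro ⟨⟨_, hp⟩, _, hm⟩ t
    rcases le_or_gt 0 t with ht | ht
    · exact (hp t ht).2
    · have := hm (-t) (by linarith)
      simpa [procSkew] using (this).2
  · intro h
    have hx : x ∈ B := by have := h 0; rwa [pr.φ_zero] at this
    exact ⟨⟨⟨trivial, hx⟩, fun t _ => ⟨trivial, h t⟩⟩, ⟨trivial, hx⟩,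
      fun t _ => ⟨trivial, h (-t)⟩⟩

lemma mem_Dset_iff {B : Set X} (hBc : IsClosed B) {Pstar : Set P}
    (hrep : ∀ q : P, ∃ p ∈ Pstar, ∃ s : ℝ, pr.θ s p = q) (T : ℝ) (q : P) (x : X) :
    x ∈ Dset pr Pstar T B q ↔ ∀ t ∈ Set.Icc (-T) T, pr.φ t q x ∈ B := by
  constructor
  · rintro ⟨s, p, hp, hθ, hG⟩
    rw [mem_Gset_prod pr hBc] at hG
    rwa [hθ] at hG
  · intro h
    obtain ⟨p, hp, s, hθ⟩ := hrep q
    exact ⟨s, p, hp, hθ, (mem_Gset_prod pr hBc T p s x).2 (by rwa [hθ])⟩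

lemma mem_Aset_iff {B : Set X} {Pstar : Set P}
    (hrep : ∀ q : P, ∃ p ∈ Pstar, ∃ s : ℝ, pr.θ s p = q) (q : P) (x : X) :
    x ∈ Aset pr Pstar B q ↔ ∀ t : ℝ, pr.φ t q x ∈ B := by
  constructor
  · rintro ⟨s, p, hp, hθ, hA⟩
    rw [mem_Ainv_prod] at hA
    rwa [hθ] at hA
  · intro h
    obtain ⟨p, hp, s, hθ⟩ := hrep q
    exact ⟨s, p, hp, hθ, (mem_Ainv_prod pr p s x).2 (by rwa [hθ])⟩

/-- Forward persistence: since `Γ^T = ∅`, a point whose orbit segment over `[-T,T]`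
lies in `B` has its whole forward orbit (from time `-T` on) in `B`. -/
lemma persist {B : Set X} (hBc : IsClosed B) {Pstar : Set P}
    (hrep : ∀ q : P, ∃ p ∈ Pstar, ∃ s : ℝ, pr.θ s p = q) {T : ℝ} (hT : 0 < T)
    (hΓ : ∀ p ∈ Pstar, GammaSet (procSkew pr p) T ((Set.univ : Set ℝ) ×ˢ B) = ∅)
    (q : P) (x : X) (h : ∀ t ∈ Set.Icc (-T) T, pr.φ t q x ∈ B) :
    ∀ t : ℝ, -T ≤ t → pr.φ t q x ∈ B := by
  by_contra hcon
  push_neg at hcon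
  obtain ⟨t₁, ht₁, hxB⟩ := hcon
  set f : ℝ → X := fun u => pr.φ u q x with hf
  have hfc : Continuous f := phi_cont_t pr q x
  set S : Set ℝ := {u | T ≤ u ∧ f u ∉ B} with hS
  have hSne : S.Nonempty := by
    refine ⟨t₁, ?_, hxB⟩
    by_contra hlt
    push_neg at hlt
    exact hxB (h t₁ ⟨ht₁, hlt.le⟩)
  have hSbdd : BddBelow S := ⟨T, fun u hu => hu.1⟩
  set t₀ := sInf S with ht₀
  have ht₀T : T ≤ t₀ := le_csInf hSne fun u hu => hu.1
  have hmem : ∀ u, -T ≤ u → u < t₀ → f u ∈ B := by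
    intro u hu hlt
    rcases le_or_gt u T with h' | h'
    · exact h u ⟨hu, h'⟩
    · by_contra hnB
      exact absurd (csInf_le hSbdd ⟨h'.le, hnB⟩) (not_le.mpr hlt)
  have hTt₀ : -T < t₀ := lt_of_lt_of_le (by linarith) ht₀T
  have ht₀B : f t₀ ∈ B := by
    have htend : Filter.Tendsto f (nhdsWithin t₀ (Set.Iio t₀)) (nhds (f t₀)) :=
      (hfc.tendsto t₀).mono_left nhdsWithin_le_nhds
    refine hBc.mem_of_tendsto htend ?_
    filter_upwards [eventually_nhdsWithin_of_eventually_nhds (eventually_gt_nhds hTt₀),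
      self_mem_nhdsWithin] with u h1 h2
    exact hmem u h1.le h2
  have hmem' : ∀ v, -T ≤ v → v ≤ t₀ → f v ∈ B := by
    intro v h1 h2
    rcases h2.lt_or_eq with h' | h'
    · exact hmem v h1 h'
    · rw [h']; exact ht₀B
  have ht₀F : f t₀ ∈ frontier B := by
    have hcl : t₀ ∈ closure S := csInf_mem_closure hSne hSbdd
    have h1 : f t₀ ∈ closure (f '' S) :=
      (hfc.continuousWithinAt).mem_closure_image hcl
    have himg : f '' S ⊆ Bᶜ := by rintro _ ⟨u, hu, rfl⟩; exact hu.2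
    have h2 : f t₀ ∈ closure Bᶜ := closure_mono himg h1
    rw [frontier_eq_closure_inter_closure, hBc.closure_eq]
    exact ⟨ht₀B, h2⟩
  obtain ⟨p, hp, s, hθ⟩ := hrep q
  have hbase : pr.θ (s + (t₀ - T)) p = pr.θ (t₀ - T) q := by
    rw [add_comm, pr.θ_add, hθ]
  have key : (s + (t₀ - T), pr.φ (t₀ - T) q x) ∈
      GammaSet (procSkew pr p) T ((Set.univ : Set ℝ) ×ˢ B) := by
    have hsecond : ∀ u : ℝ,
        pr.φ u (pr.θ (s + (t₀ - T)) p) (pr.φ (t₀ - T) q x) = f (u + (t₀ - T)) := by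
      intro u
      rw [hbase, phi_shift]
    refine ⟨?_, T, ⟨hT.le, le_refl T⟩, ?_⟩
    · intro u hu
      simp only [Gset, procSkew, Set.mem_setOf_eq, closure_prod_eq, closure_univ,
        hBc.closure_eq, Set.mem_prod, Set.mem_univ, true_and]
      rw [hsecond u]
      exact hmem' (u + (t₀ - T)) (by linarith [hu.1]) (by linarith [hu.2])
    · show procSkew pr p T _ ∈ frontier _
      have hfr : frontier ((Set.univ : Set ℝ) ×ˢ B) = (Set.univ : Set ℝ) ×ˢ frontier B := by
        rw [frontier_prod_eq]
        simp
      rw [hfr]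
      refine ⟨trivial, ?_⟩
      show pr.φ T (pr.θ (s + (t₀ - T)) p) (pr.φ (t₀ - T) q x) ∈ frontier B
      rw [hsecond T, show T + (t₀ - T) = t₀ by ring]
      exact ht₀F
  rw [hΓ p hp] at key
  exact key

end Aux

/-- Continuation of a local attractor for a general non-autonomous dynamical system:
`D` is closed-valued and forward invariant, `A` is invariant with nonempty compact
values, and `U_ε(A(q)) ⊆ D(q)`; i.e. `A` is a past attractor. -/
theorem stmt14 {P X : Type*} [MetricSpace X] [LocallyCompactSpace X]
    (pr : TwoSidedProcess P X)
    (π₀ : ℝ → X → X) (hπ₀ : IsFlow π₀) (B : Set X) (hBcpt : IsCompact B)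
    (hB : IsStableIsolatingBlock π₀ B) (hne : (Ainv π₀ B).Nonempty)
    (Pstar : Set P)
    (hrep : ∀ q : P, ∃ p ∈ Pstar, ∃ s : ℝ, pr.θ s p = q)
    (huniq : ∀ p ∈ Pstar, ∀ p' ∈ Pstar, (∃ s : ℝ, pr.θ s p = p') → p = p')
    (T δ ε : ℝ) (hT : 0 < T) (hδ : 0 < δ) (hε : 0 < ε)
    (hcpt : IsCompact (closure (Metric.thickening δ B)))
    (hΓ : ∀ p ∈ Pstar, GammaSet (procSkew pr p) T ((Set.univ : Set ℝ) ×ˢ B) = ∅)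
    (hGne : ∀ p ∈ Pstar, (Gset (procSkew pr p) T ((Set.univ : Set ℝ) ×ˢ B)).Nonempty)
    (h1 : Metric.thickening δ (Gset (prodFlow π₀) (2 * T) ((Set.univ : Set ℝ) ×ˢ B)) ⊆
      Gset (prodFlow π₀) T ((Set.univ : Set ℝ) ×ˢ B))
    (h2 : Metric.thickening δ (Gset (prodFlow π₀) T ((Set.univ : Set ℝ) ×ˢ B)) ⊆
      (Set.univ : Set ℝ) ×ˢ B)
    (h3 : Metric.thickening δ
        (Gset (prodFlow π₀) T (Metric.thickening δ ((Set.univ : Set ℝ) ×ˢ B))) ⊆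
      (Set.univ : Set ℝ) ×ˢ B)
    (hclose : ∀ p ∈ Pstar, ∀ z ∈ (Set.univ : Set ℝ) ×ˢ closure (Metric.thickening δ B),
      ∀ t ∈ Set.Icc (-T) T, dist (prodFlow π₀ t z) (procSkew pr p t z) < δ / 3)
    (hA : ∀ p ∈ Pstar,
      Metric.thickening ε (Ainv (procSkew pr p) ((Set.univ : Set ℝ) ×ˢ B)) ⊆
        Gset (procSkew pr p) T ((Set.univ : Set ℝ) ×ˢ B)) :
    (∀ q : P, IsClosed (Dset pr Pstar T B q)) ∧
    (∀ q : P, ∀ x ∈ Dset pr Pstar T B q, ∀ t : ℝ, 0 ≤ t →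
      pr.φ t q x ∈ Dset pr Pstar T B (pr.θ t q)) ∧
    (∀ (q : P) (t : ℝ), 0 ≤ t →
      pr.φ t q '' Aset pr Pstar B q = Aset pr Pstar B (pr.θ t q)) ∧
    (∀ q : P, (Aset pr Pstar B q).Nonempty ∧ IsCompact (Aset pr Pstar B q)) ∧
    ∀ q : P, Metric.thickening ε (Aset pr Pstar B q) ⊆ Dset pr Pstar T B q := by
  classical
  have hBc : IsClosed B := hBcpt.isClosed
  obtain ⟨xs, hxs⟩ := hne
  have hxsB : ∀ t : ℝ, π₀ t xs ∈ B := by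
    obtain ⟨⟨hx0, hplus⟩, _, hminus⟩ := hxs
    intro t
    rcases le_or_gt 0 t with ht | ht
    · exact hplus t ht
    · have := hminus (-t) (by linarith)
      rwa [neg_neg] at this
  have hxsB0 : xs ∈ B := by have := hxsB 0; rwa [hπ₀.2.1] at this
  -- the point xs lies in every D(q)
  have hstar : ∀ q : P, ∀ t ∈ Set.Icc (-T) T, pr.φ t q xs ∈ B := by
    intro q t ht
    obtain ⟨p, hp, s, hθ⟩ := hrep q
    have hz : (s, xs) ∈ (Set.univ : Set ℝ) ×ˢ closure (Metric.thickening δ B) :=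
      ⟨trivial, subset_closure (Metric.self_subset_thickening hδ B hxsB0)⟩
    have hd := hclose p hp (s, xs) hz t ht
    have hmemG : prodFlow π₀ t (s, xs) ∈
        Gset (prodFlow π₀) T ((Set.univ : Set ℝ) ×ˢ B) := by
      intro u hu
      simp only [prodFlow, closure_prod_eq, closure_univ, hBc.closure_eq,
        Set.mem_prod, Set.mem_univ, true_and]
      rw [← hπ₀.2.2]
      exact hxsB _
    have hthick : procSkew pr p t (s, xs) ∈
        Metric.thickening δ (Gset (prodFlow π₀) T ((Set.univ : Set ℝ) ×ˢ B)) := by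
      rw [Metric.mem_thickening_iff]
      exact ⟨_, hmemG, by rw [dist_comm]; linarith⟩
    have h2' := h2 hthick
    have : pr.φ t (pr.θ s p) xs ∈ B := h2'.2
    rwa [hθ] at this
  have hper : ∀ (q : P) (x : X), (∀ t ∈ Set.Icc (-T) T, pr.φ t q x ∈ B) →
      ∀ t : ℝ, -T ≤ t → pr.φ t q x ∈ B :=
    fun q x h => persist pr hBc hrep hT hΓ q x h
  have hstar' : ∀ q : P, ∀ t : ℝ, -T ≤ t → pr.φ t q xs ∈ B :=
    fun q => hper q xs (hstar q)
  -- nonemptiness of A(q), by a pullback argument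
  have hAne : ∀ q : P, ∃ a : X, ∀ t : ℝ, pr.φ t q a ∈ B := by
    intro q
    set z : ℕ → X := fun n => pr.φ (n : ℝ) (pr.θ (-(n : ℝ)) q) xs with hzdef
    have hzmem : ∀ (n : ℕ) (t : ℝ), -(n : ℝ) ≤ t → pr.φ t q (z n) ∈ B := by
      intro n t ht
      have hb : pr.θ (n : ℝ) (pr.θ (-(n : ℝ)) q) = q := theta_cancel pr _ q
      have hcalc : pr.φ t q (z n) = pr.φ (t + n) (pr.θ (-(n : ℝ)) q) xs := by
        conv_lhs => rw [← hb]
        rw [hzdef, phi_shift]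
      rw [hcalc]
      exact hstar' _ _ (by have := n.cast_nonneg (α := ℝ); linarith)
    have hzB : ∀ n, z n ∈ B := by
      intro n
      have := hzmem n 0 (by simpa using n.cast_nonneg (α := ℝ))
      rwa [pr.φ_zero] at this
    obtain ⟨a, haB, σ, hσ, hconv⟩ := hBcpt.tendsto_subseq hzB
    refine ⟨a, fun t => ?_⟩
    have hcont : Continuous fun y : X => pr.φ t q y := phi_cont' pr q t
    refine hBc.mem_of_tendsto ((hcont.tendsto a).comp hconv) ?_
    filter_upwards [Filter.eventually_ge_atTop ⌈-t⌉₊] with k hk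
    refine hzmem (σ k) t ?_
    have h1 : -t ≤ (⌈-t⌉₊ : ℝ) := Nat.le_ceil _
    have h2 : (⌈-t⌉₊ : ℝ) ≤ (σ k : ℝ) := by
      exact_mod_cast le_trans hk (hσ.le_apply)
    linarith
  refine ⟨?_, ?_, ?_, ?_, ?_⟩
  · -- D(q) closed
    intro q
    have : Dset pr Pstar T B q =
        ⋂ t ∈ Set.Icc (-T) T, (fun y : X => pr.φ t q y) ⁻¹' B := by
      ext y
      rw [mem_Dset_iff pr hBc hrep]
      simp
    rw [this]
    exact isClosed_biInter fun t _ => hBc.preimage (phi_cont' pr q t)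
  · -- D forward invariant
    intro q x hx t ht
    rw [mem_Dset_iff pr hBc hrep] at hx
    rw [mem_Dset_iff pr hBc hrep]
    intro u hu
    rw [phi_shift]
    exact hper q x hx (u + t) (by linarith [hu.1])
  · -- A invariant
    intro q t _
    ext y
    simp only [Set.mem_image]
    constructor
    · rintro ⟨x, hx, rfl⟩
      rw [mem_Aset_iff pr hrep] at hx
      rw [mem_Aset_iff pr hrep]
      intro u
      rw [phi_shift]
      exact hx _
    · intro hy
      rw [mem_Aset_iff pr hrep] at hy
      have hb : pr.θ (-t) (pr.θ t q) = q := theta_cancel' pr t q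
      refine ⟨pr.φ (-t) (pr.θ t q) y, ?_, ?_⟩
      · rw [mem_Aset_iff pr hrep]
        intro u
        have h' := phi_shift pr u (-t) (pr.θ t q) y
        rw [hb] at h'
        rw [h']
        exact hy _
      · have h' := phi_shift pr t (-t) (pr.θ t q) y
        rw [hb] at h'
        rw [h']
        simp [pr.φ_zero]
  · -- A(q) nonempty and compact
    intro q
    constructor
    · obtain ⟨a, ha⟩ := hAne q
      exact ⟨a, (mem_Aset_iff pr hrep q a).2 ha⟩
    · have hsub : Aset pr Pstar B q ⊆ B := by
        intro y hy
        have := (mem_Aset_iff pr hrep q y).1 hy 0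
        rwa [pr.φ_zero] at this
      have hcl : IsClosed (Aset pr Pstar B q) := by
        have : Aset pr Pstar B q = ⋂ t : ℝ, (fun y : X => pr.φ t q y) ⁻¹' B := by
          ext y
          rw [mem_Aset_iff pr hrep]
          simp
        rw [this]
        exact isClosed_iInter fun t => hBc.preimage (phi_cont' pr q t)
      exact hBcpt.of_isClosed_subset hcl hsub
  · -- U_ε(A(q)) ⊆ D(q)
    intro q y hy
    rw [Metric.mem_thickening_iff] at hy
    obtain ⟨x, hx, hdxy⟩ := hy
    obtain ⟨p, hp, s, hθ⟩ := hrep q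
    have hxA : (s, x) ∈ Ainv (procSkew pr p) ((Set.univ : Set ℝ) ×ˢ B) := by
      rw [mem_Ainv_prod, hθ]
      exact (mem_Aset_iff pr hrep q x).1 hx
    have hthick : (s, y) ∈
        Metric.thickening ε (Ainv (procSkew pr p) ((Set.univ : Set ℝ) ×ˢ B)) := by
      rw [Metric.mem_thickening_iff]
      refine ⟨(s, x), hxA, ?_⟩
      rw [Prod.dist_eq]
      simpa [dist_self, max_eq_right dist_nonneg] using hdxy
    have hG := hA p hp hthick
    rw [mem_Gset_prod pr hBc] at hG
    refine ⟨s, p, hp, hθ, (mem_Gset_prod pr hBc T p s y).2 hG⟩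
end

section
/- Let π₀ be a local semiflow on a metric space X, let B ⊆ X be closed and strongly π₀-admissible, let U ⊆ X be open with B ⊆ U, cl U strongly π₀-admissible, and d(B, X ∖ U) ≥ δ₀ for some δ₀ > 0. Let π_n be local semiflows on ℝ × X, none of which explodes in N := ℝ × B, and suppose π_n converges to π₀ uniformly, in the sense that for every t̄ > 0, sup{ d(P₂((s,x)π_n t), xπ₀t) : (s,x) ∈ ℝ × U, 0 < t ≤ t̄, t < min(ω^{π₀}_x, ω^{π_n}_{(s,x)}) } → 0 as n → ∞. Then N is strongly {π_n}-semi-singular-admissible. -/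
open Set Metric Filter Topology
open scoped NNReal ENNReal

/-- A local semiflow on a metric space `Z`: a map defined on an "open" domain
`D = {(t,z) : 0 ≤ t, t < ω z} ⊆ [0,∞) × Z` (openness within `[0,∞) × Z`),
continuous on `D`, with `zπ0 = z` and the local semigroup property. -/
structure LocalSemiflow (Z : Type*) [MetricSpace Z] where
  /-- The escape time of a point. -/
  ω : Z → ℝ≥0∞
  ω_pos : ∀ z, 0 < ω z
  /-- The semiflow map; only its values for `0 ≤ t` with `ENNReal.ofReal t < ω z`
  are relevant. -/
  toFun : ℝ → Z → Z
  /-- The domain is open in `[0,∞) × Z`. -/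
  isOpenDom : ∀ (t : ℝ) (z : Z), 0 ≤ t → ENNReal.ofReal t < ω z →
    ∃ ε > 0, ∀ (t' : ℝ) (z' : Z), |t' - t| < ε → dist z' z < ε → 0 ≤ t' →
      ENNReal.ofReal t' < ω z'
  contOn : ContinuousOn (fun p : ℝ × Z => toFun p.1 p.2)
    {p : ℝ × Z | 0 ≤ p.1 ∧ ENNReal.ofReal p.1 < ω p.2}
  map_zero : ∀ z, toFun 0 z = z
  map_add : ∀ (s t : ℝ) (z : Z), 0 ≤ s → ENNReal.ofReal s < ω z → 0 ≤ t →
    ENNReal.ofReal t < ω (toFun s z) →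
    ENNReal.ofReal (s + t) < ω z ∧ toFun (s + t) z = toFun t (toFun s z)

/-- `π` does not explode in `N`: if the whole forward orbit of `z` stays in `N`
then `ω z = ∞`. -/
def DoesNotExplodeIn {Z : Type*} [MetricSpace Z] (ρ : LocalSemiflow Z) (N : Set Z) : Prop :=
  ∀ z : Z, (∀ t : ℝ, 0 ≤ t → ENNReal.ofReal t < ρ.ω z → ρ.toFun t z ∈ N) → ρ.ω z = ⊤

/-- A closed set `N` is strongly `ρ`-admissible: `ρ` does not explode in `N` and
endpoint sequences of orbit segments `z_nρ[0,t_n] ⊆ N` with `t_n → ∞` have convergent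
subsequences. -/
def StronglyAdmissible {Z : Type*} [MetricSpace Z] (ρ : LocalSemiflow Z) (N : Set Z) : Prop :=
  DoesNotExplodeIn ρ N ∧
  ∀ (z : ℕ → Z) (t : ℕ → ℝ), (∀ n, 0 ≤ t n) →
    Filter.Tendsto t Filter.atTop Filter.atTop →
    (∀ n, ENNReal.ofReal (t n) < ρ.ω (z n)) →
    (∀ n, ∀ r : ℝ, 0 ≤ r → r ≤ t n → ρ.toFun r (z n) ∈ N) →
    ∃ φ : ℕ → ℕ, StrictMono φ ∧ ∃ l : Z,
      Filter.Tendsto (fun m => ρ.toFun (t (φ m)) (z (φ m))) Filter.atTop (nhds l)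

/-- `A⁺_ρ(Y)` for a local semiflow. -/
def AplusL {Z : Type*} [MetricSpace Z] (ρ : LocalSemiflow Z) (Y : Set Z) : Set Z :=
  {z ∈ Y | ∀ t : ℝ, 0 ≤ t → ENNReal.ofReal t < ρ.ω z → ρ.toFun t z ∈ Y}

/-- A full left solution of a local semiflow through `z`. -/
def IsFullLeftSolution {Z : Type*} [MetricSpace Z] (ρ : LocalSemiflow Z)
    (σ : ℝ → Z) (z : Z) : Prop :=
  σ 0 = z ∧ ∀ t s : ℝ, t ≤ 0 → 0 ≤ s → t + s ≤ 0 →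
    ENNReal.ofReal s < ρ.ω (σ t) ∧ ρ.toFun s (σ t) = σ (t + s)

/-- `A⁻_ρ(Y)` for a local semiflow: points admitting a full left solution in `Y`. -/
def AminusL {Z : Type*} [MetricSpace Z] (ρ : LocalSemiflow Z) (Y : Set Z) : Set Z :=
  {z ∈ Y | ∃ σ : ℝ → Z, IsFullLeftSolution ρ σ z ∧ ∀ t : ℝ, t ≤ 0 → σ t ∈ Y}

/-- `A_ρ(Y) = A⁺_ρ(Y) ∩ A⁻_ρ(Y)`. -/
def AinvL {Z : Type*} [MetricSpace Z] (ρ : LocalSemiflow Z) (Y : Set Z) : Set Z :=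
  AplusL ρ Y ∩ AminusL ρ Y

/-- `⟨N,L⟩` is an index pair in the closed isolating neighborhood `Ñ` w.r.t. `ρ`
(for `K = A_ρ(Ñ)`): `K ⊆ int(N ∖ L)`, `K` is the maximal invariant set in `cl(N ∖ L)`,
`L` is positively invariant relative to `N`, and `L` is an exit ramp for `N`. -/
def IsIndexPair {Z : Type*} [MetricSpace Z] (ρ : LocalSemiflow Z)
    (Ntil N L : Set Z) : Prop :=
  L ⊆ N ∧ N ⊆ Ntil ∧
  AinvL ρ Ntil ⊆ interior (N \ L) ∧
  (AinvL ρ Ntil ⊆ closure (N \ L) ∧ AinvL ρ Ntil = AinvL ρ (AinvL ρ Ntil) ∧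
    ∀ S ⊆ closure (N \ L), S = AinvL ρ S → S ⊆ AinvL ρ Ntil) ∧
  (∀ z ∈ L, ∀ ε : ℝ, 0 ≤ ε → ENNReal.ofReal ε < ρ.ω z →
    (∀ r : ℝ, 0 ≤ r → r ≤ ε → ρ.toFun r z ∈ N) →
    ∀ r : ℝ, 0 ≤ r → r ≤ ε → ρ.toFun r z ∈ L) ∧
  (∀ z ∈ N, ¬ (∀ t : ℝ, 0 ≤ t → ENNReal.ofReal t < ρ.ω z → ρ.toFun t z ∈ N) →
    ∃ t : ℝ, 0 ≤ t ∧ ENNReal.ofReal t < ρ.ω z ∧ ρ.toFun t z ∈ L)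

/-- Semi-singular convergence of local semiflows `π_n` on `ℝ × X` to a local
semiflow `π₀` on `X`. -/
def SemiSingConvLoc {X : Type*} [MetricSpace X]
    (πn : ℕ → LocalSemiflow (ℝ × X)) (π₀ : LocalSemiflow X) : Prop :=
  ∀ (s : ℕ → ℝ) (x : ℕ → X) (x₀ : X) (t : ℕ → ℝ) (t₀ : ℝ),
    Filter.Tendsto x Filter.atTop (nhds x₀) → (∀ n, 0 ≤ t n) →
    Filter.Tendsto t Filter.atTop (nhds t₀) →
    (∀ n, ENNReal.ofReal (t n) < (πn n).ω (s n, x n)) →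
    ENNReal.ofReal t₀ < π₀.ω x₀ ∧
      Filter.Tendsto (fun n => ((πn n).toFun (t n) (s n, x n)).2) Filter.atTop
        (nhds (π₀.toFun t₀ x₀))

/-- `N ⊆ ℝ × X` is `{π_n}`-semi-singular-admissible: projected endpoint sequences of
orbit segments `(s_n,x_n)π_n[0,t_n] ⊆ N` with `t_n → ∞` have convergent subsequences. -/
def SemiSingAdmissible {X : Type*} [MetricSpace X]
    (πn : ℕ → LocalSemiflow (ℝ × X)) (N : Set (ℝ × X)) : Prop :=
  ∀ (s : ℕ → ℝ) (x : ℕ → X) (t : ℕ → ℝ), (∀ n, 0 ≤ t n) →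
    Filter.Tendsto t Filter.atTop Filter.atTop →
    (∀ n, ENNReal.ofReal (t n) < (πn n).ω (s n, x n)) →
    (∀ n, ∀ r : ℝ, 0 ≤ r → r ≤ t n → (πn n).toFun r (s n, x n) ∈ N) →
    ∃ φ : ℕ → ℕ, StrictMono φ ∧ ∃ l : X,
      Filter.Tendsto (fun m => ((πn (φ m)).toFun (t (φ m)) (s (φ m), x (φ m))).2)
        Filter.atTop (nhds l)

/-- Strong `{π_n}`-semi-singular-admissibility. -/
def StronglySemiSingAdmissible {X : Type*} [MetricSpace X]
    (πn : ℕ → LocalSemiflow (ℝ × X)) (N : Set (ℝ × X)) : Prop :=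
  SemiSingAdmissible πn N ∧ ∀ n, DoesNotExplodeIn (πn n) N

/-- `N ⊆ ℝ × X` is strongly `π`-semi-admissible: `π` does not explode in `N` and endpoint
sequences of orbit segments `(s_n,x_n)π[0,t_n] ⊆ N` with `t_n → ∞` and `(s_n + t_n)`
precompact have convergent subsequences. -/
def StronglySemiAdmissible {X : Type*} [MetricSpace X]
    (π : LocalSemiflow (ℝ × X)) (N : Set (ℝ × X)) : Prop :=
  DoesNotExplodeIn π N ∧
  ∀ (s : ℕ → ℝ) (x : ℕ → X) (t : ℕ → ℝ), (∀ n, 0 ≤ t n) →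
    Filter.Tendsto t Filter.atTop Filter.atTop →
    Bornology.IsBounded (Set.range fun n => s n + t n) →
    (∀ n, ENNReal.ofReal (t n) < π.ω (s n, x n)) →
    (∀ n, ∀ r : ℝ, 0 ≤ r → r ≤ t n → π.toFun r (s n, x n) ∈ N) →
    ∃ φ : ℕ → ℕ, StrictMono φ ∧ ∃ l : ℝ × X,
      Filter.Tendsto (fun m => π.toFun (t (φ m)) (s (φ m), x (φ m)))
        Filter.atTop (nhds l)

/-- The product local semiflow on `ℝ × X` of a local semiflow on `X`:
`(s,x)πt = (s+t, xπ₀t)`. -/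
noncomputable def prodLocal {X : Type*} [MetricSpace X] (π₀ : LocalSemiflow X) :
    LocalSemiflow (ℝ × X) where
  ω := fun p => π₀.ω p.2
  ω_pos := fun p => π₀.ω_pos p.2
  toFun := fun t p => (p.1 + t, π₀.toFun t p.2)
  isOpenDom := by
    intro t z ht hlt
    obtain ⟨ε, hε, h⟩ := π₀.isOpenDom t z.2 ht hlt
    refine ⟨ε, hε, fun t' z' ht' hz' ht'0 => h t' z'.2 ht' ?_ ht'0⟩
    calc dist z'.2 z.2 ≤ dist z' z := by rw [Prod.dist_eq]; exact le_max_right _ _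
    _ < ε := hz'
  contOn := by
    apply ContinuousOn.prodMk
    · exact (continuous_snd.fst.add continuous_fst).continuousOn
    · exact π₀.contOn.comp (continuous_fst.prodMk continuous_snd.snd).continuousOn
        (fun p hp => ⟨hp.1, hp.2⟩)
  map_zero := fun z => by simp [π₀.map_zero]
  map_add := by
    intro s t z hs hws ht hwt
    obtain ⟨h1, h2⟩ := π₀.map_add s t z.2 hs hws ht hwt
    exact ⟨h1, by simp [h2, add_assoc]⟩

/-- A local semiflow on `ℝ × X` is a skew product if `P₁((s,x)πt) = s + t`
whenever defined. -/
def IsSkewLocal {X : Type*} [MetricSpace X] (π : LocalSemiflow (ℝ × X)) : Prop :=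
  ∀ (t s : ℝ) (x : X), 0 ≤ t → ENNReal.ofReal t < π.ω (s, x) →
    (π.toFun t (s, x)).1 = s + t

lemma exists_pos_ofReal_lt (w : ℝ≥0∞) (h : 0 < w) :
    ∃ δ : ℝ, 0 < δ ∧ ENNReal.ofReal δ < w := by
  rcases eq_or_ne w ⊤ with h1 | h1
  · exact ⟨1, one_pos, by simp [h1]⟩
  · have ht := ENNReal.toReal_pos h.ne' h1
    refine ⟨w.toReal / 2, by linarith, ?_⟩
    rw [ENNReal.ofReal_lt_iff_lt_toReal (by linarith) h1]
    linarith

lemma lemA {Z : Type*} [MetricSpace Z] (π : LocalSemiflow Z) (N : Set Z)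
    (hne : DoesNotExplodeIn π N) (z : Z) (a b : ℝ) (ha : 0 ≤ a) (hb : 0 ≤ b)
    (hab : ENNReal.ofReal (a + b) < π.ω z)
    (horb : ∀ r, 0 ≤ r → r ≤ a + b → π.toFun r z ∈ N) :
    ∀ r, 0 ≤ r → r ≤ b →
      ENNReal.ofReal r < π.ω (π.toFun a z) ∧
      π.toFun r (π.toFun a z) = π.toFun (a + r) z := by
  set w := π.toFun a z with hw
  set P : ℝ → Prop := fun q => ENNReal.ofReal q < π.ω w ∧ π.toFun q w = π.toFun (a + q) z
    with hPdef
  have hP0 : P 0 := by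
    constructor
    · simpa using π.ω_pos w
    · rw [π.map_zero, add_zero]
  set S : Set ℝ := {r | 0 ≤ r ∧ r ≤ b ∧ ∀ q, 0 ≤ q → q ≤ r → P q} with hSdef
  have h0S : (0:ℝ) ∈ S := ⟨le_refl 0, hb, fun q hq hq' => by
    have hq0 : q = 0 := le_antisymm hq' hq
    rw [hq0]; exact hP0⟩
  have hSne : S.Nonempty := ⟨0, h0S⟩
  have hbdd : BddAbove S := ⟨b, fun r hr => hr.2.1⟩
  have hstep : ∀ r, 0 ≤ r → r ≤ b → P r → ∀ δ', 0 ≤ δ' →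
      ENNReal.ofReal δ' < π.ω (π.toFun r w) → P (r + δ') := by
    intro r hr hrb hPr δ' hδ' hδω
    obtain ⟨h1, h2⟩ := π.map_add r δ' w hr hPr.1 hδ' hδω
    have har : ENNReal.ofReal (a + r) < π.ω z :=
      lt_of_le_of_lt (ENNReal.ofReal_le_ofReal (by linarith)) hab
    have hδω2 : ENNReal.ofReal δ' < π.ω (π.toFun (a + r) z) := by rw [← hPr.2]; exact hδω
    obtain ⟨h3, h4⟩ := π.map_add (a + r) δ' z (by linarith) har hδ' hδω2
    refine ⟨h1, ?_⟩
    rw [h2, hPr.2]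
    have hre : a + (r + δ') = a + r + δ' := by ring
    rw [hre, h4]
  set c := sSup S with hc
  have hc0 : 0 ≤ c := le_csSup hbdd h0S
  have hcb : c ≤ b := csSup_le hSne (fun r hr => hr.2.1)
  have hPlt : ∀ q, 0 ≤ q → q < c → P q := by
    intro q hq hqc
    obtain ⟨r, hrS, hqr⟩ := exists_lt_of_lt_csSup hSne hqc
    exact hrS.2.2 q hq hqr.le
  have hωc : ENNReal.ofReal c < π.ω w := by
    by_contra h
    push_neg at h
    have hc_pos : 0 < c := by
      have h2 : (0:ℝ≥0∞) < ENNReal.ofReal c := lt_of_lt_of_le (π.ω_pos w) h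
      exact ENNReal.ofReal_pos.mp h2
    have hall : ∀ τ : ℝ, 0 ≤ τ → ENNReal.ofReal τ < π.ω w → π.toFun τ w ∈ N := by
      intro τ hτ hτω
      have hτc : τ < c :=
        (ENNReal.ofReal_lt_ofReal_iff hc_pos).mp (lt_of_lt_of_le hτω h)
      have hPτ := hPlt τ hτ hτc
      rw [hPτ.2]
      exact horb (a + τ) (by linarith) (by linarith)
    have htop := hne w hall
    rw [htop] at h
    exact ENNReal.ofReal_ne_top (top_le_iff.mp h)
  have hPc : P c := by
    rcases eq_or_lt_of_le hc0 with h0 | h0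
    · rw [← h0]; exact hP0
    · refine ⟨hωc, ?_⟩
      set u : ℕ → ℝ := fun j => c - c / (j + 2) with hu
      have hu_lt : ∀ j, u j < c := by
        intro j
        have hpos : 0 < c / ((j:ℝ) + 2) := by positivity
        show c - c / ((j:ℝ) + 2) < c
        linarith
      have hu_nonneg : ∀ j, 0 ≤ u j := by
        intro j
        have h1 : c / ((j:ℝ) + 2) ≤ c := by
          apply div_le_self hc0
          have : (0:ℝ) ≤ (j:ℝ) := Nat.cast_nonneg j
          linarith
        show 0 ≤ c - c / ((j:ℝ) + 2)
        linarith
      have hf : Tendsto (fun j : ℕ => (j:ℝ) + 2) atTop atTop :=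
        tendsto_atTop_add_const_right _ 2 tendsto_natCast_atTop_atTop
      have h1 : Tendsto (fun j : ℕ => c / ((j:ℝ) + 2)) atTop (nhds 0) :=
        hf.const_div_atTop c
      have hu_tend : Tendsto u atTop (nhds c) := by
        have h2 := Tendsto.sub
          (tendsto_const_nhds : Tendsto (fun _ : ℕ => c) atTop (nhds c)) h1
        simpa using h2
      have hcwD : ((c, w) : ℝ × Z) ∈
          {p : ℝ × Z | 0 ≤ p.1 ∧ ENNReal.ofReal p.1 < π.ω p.2} := ⟨hc0, hωc⟩
      have hDlim1 : Tendsto (fun j => π.toFun (u j) w) atTop (nhds (π.toFun c w)) := by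
        have hco := (π.contOn (c, w) hcwD).tendsto
        have hseq : Tendsto (fun j => ((u j, w) : ℝ × Z)) atTop
            (nhdsWithin (c, w) {p : ℝ × Z | 0 ≤ p.1 ∧ ENNReal.ofReal p.1 < π.ω p.2}) := by
          rw [tendsto_nhdsWithin_iff]
          constructor
          · exact hu_tend.prodMk_nhds tendsto_const_nhds
          · exact Filter.Eventually.of_forall fun j =>
              ⟨hu_nonneg j, lt_of_le_of_lt (ENNReal.ofReal_le_ofReal (hu_lt j).le) hωc⟩
        exact hco.comp hseq
      have haczD : ((a + c, z) : ℝ × Z) ∈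
          {p : ℝ × Z | 0 ≤ p.1 ∧ ENNReal.ofReal p.1 < π.ω p.2} := by
        constructor
        · show (0:ℝ) ≤ a + c; linarith
        · show ENNReal.ofReal (a + c) < π.ω z
          exact lt_of_le_of_lt (ENNReal.ofReal_le_ofReal (by linarith)) hab
      have hDlim2 : Tendsto (fun j => π.toFun (a + u j) z) atTop
          (nhds (π.toFun (a + c) z)) := by
        have hco := (π.contOn (a + c, z) haczD).tendsto
        have hseq : Tendsto (fun j => ((a + u j, z) : ℝ × Z)) atTop
            (nhdsWithin (a + c, z) {p : ℝ × Z | 0 ≤ p.1 ∧ ENNReal.ofReal p.1 < π.ω p.2}) := by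
          rw [tendsto_nhdsWithin_iff]
          constructor
          · exact (tendsto_const_nhds.add hu_tend).prodMk_nhds tendsto_const_nhds
          · refine Filter.Eventually.of_forall fun j => ⟨?_, ?_⟩
            · have := hu_nonneg j; show (0:ℝ) ≤ a + u j; linarith
            · refine lt_of_le_of_lt (ENNReal.ofReal_le_ofReal ?_) hab
              have := hu_lt j; show a + u j ≤ a + b; linarith
        exact hco.comp hseq
      have heq : ∀ j, π.toFun (u j) w = π.toFun (a + u j) z := fun j =>
        (hPlt (u j) (hu_nonneg j) (hu_lt j)).2
      exact tendsto_nhds_unique (hDlim1.congr heq) hDlim2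
  have hcS : c ∈ S := ⟨hc0, hcb, fun q hq hqc => by
    rcases lt_or_eq_of_le hqc with h | h
    · exact hPlt q hq h
    · rw [h]; exact hPc⟩
  have hcb' : c = b := by
    by_contra hne2
    have hcb2 : c < b := lt_of_le_of_ne hcb hne2
    obtain ⟨δ, hδ, hδω⟩ := exists_pos_ofReal_lt _ (π.ω_pos (π.toFun c w))
    set δ' := min δ (b - c) with hδ'def
    have hδ'pos : 0 < δ' := lt_min hδ (by linarith)
    have hδ'le : δ' ≤ δ := min_le_left _ _
    have hδ'le2 : δ' ≤ b - c := min_le_right _ _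
    have hmemS : c + δ' ∈ S := by
      refine ⟨by linarith, by linarith, fun q hq hqcd => ?_⟩
      rcases le_or_gt q c with h | h
      · exact hcS.2.2 q hq h
      · have hP' := hstep c hc0 hcb hPc (q - c) (by linarith)
          (lt_of_le_of_lt (ENNReal.ofReal_le_ofReal (by linarith)) hδω)
        have : c + (q - c) = q := by ring
        rwa [this] at hP'
    have := le_csSup hbdd hmemS
    linarith
  intro r hr hrb
  exact hcS.2.2 r hr (by rw [hcb']; exact hrb)

/-- If `B` is closed and strongly `π₀`-admissible, `B ⊆ U` with `cl U` strongly
`π₀`-admissible and `d(B, X ∖ U) ≥ δ₀ > 0`, the `π_n` do not explode in `N = ℝ × B`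
and `π_n → π₀` uniformly, then `N` is strongly `{π_n}`-semi-singular-admissible. -/
theorem stmt16 {X : Type*} [MetricSpace X]
    (π₀ : LocalSemiflow X) (B : Set X) (hBclosed : IsClosed B)
    (hBadm : StronglyAdmissible π₀ B)
    (U : Set X) (hUopen : IsOpen U) (hBU : B ⊆ U)
    (hUadm : StronglyAdmissible π₀ (closure U))
    (δ₀ : ℝ) (hδ₀ : 0 < δ₀)
    (hdist : ∀ x ∈ B, ∀ y ∈ Uᶜ, δ₀ ≤ dist x y)
    (πn : ℕ → LocalSemiflow (ℝ × X))
    (hnoexp : ∀ n, DoesNotExplodeIn (πn n) ((Set.univ : Set ℝ) ×ˢ B))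
    (hunif : ∀ tbar > (0:ℝ), ∀ ε > (0:ℝ), ∃ n₀ : ℕ, ∀ n ≥ n₀,
      ∀ (s : ℝ) (x : X) (t : ℝ), x ∈ U → 0 < t → t ≤ tbar →
        ENNReal.ofReal t < π₀.ω x → ENNReal.ofReal t < (πn n).ω (s, x) →
        dist ((πn n).toFun t (s, x)).2 (π₀.toFun t x) < ε) :
    StronglySemiSingAdmissible πn ((Set.univ : Set ℝ) ×ˢ B) := by
  refine ⟨?_, hnoexp⟩
  intro s x t ht0 httop hω horb
  have hgood : ∀ k : ℕ, ∃ Nk : ℕ, ∀ n ≥ Nk, ((k:ℝ) + 1 ≤ t n ∧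
      ∀ (σ : ℝ) (ξ : X) (τ : ℝ), ξ ∈ U → 0 < τ → τ ≤ (k:ℝ) + 1 →
        ENNReal.ofReal τ < π₀.ω ξ → ENNReal.ofReal τ < (πn n).ω (σ, ξ) →
        dist ((πn n).toFun τ (σ, ξ)).2 (π₀.toFun τ ξ) < min δ₀ (1 / ((k:ℝ) + 1))) := by
    intro k
    have hk1 : (0:ℝ) < (k:ℝ) + 1 := by positivity
    have hεpos : 0 < min δ₀ (1 / ((k:ℝ) + 1)) := lt_min hδ₀ (by positivity)
    obtain ⟨N2, hN2⟩ := hunif ((k:ℝ) + 1) hk1 _ hεpos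
    have hev := Filter.tendsto_atTop.mp httop ((k:ℝ) + 1)
    rw [Filter.eventually_atTop] at hev
    obtain ⟨N1, hN1⟩ := hev
    refine ⟨max N1 N2, fun n hn => ⟨hN1 n (le_trans (le_max_left _ _) hn),
      fun σ ξ τ h1 h2 h3 h4 h5 =>
        hN2 n (le_trans (le_max_right _ _) hn) σ ξ τ h1 h2 h3 h4 h5⟩⟩
  choose g hg using hgood
  set m : ℕ → ℕ := fun k => Nat.rec (g 0) (fun k ih => max (g (k+1)) (ih + 1)) k with hmdef
  have hm_succ : ∀ k, m (k+1) = max (g (k+1)) (m k + 1) := fun k => rfl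
  have hm_mono : StrictMono m := strictMono_nat_of_lt_succ (fun k => by
    rw [hm_succ]; exact lt_of_lt_of_le (Nat.lt_succ_self _) (le_max_right _ _))
  have hm_ge : ∀ k, g k ≤ m k := by
    intro k
    cases k with
    | zero => exact le_refl _
    | succ k => rw [hm_succ]; exact le_max_left _ _
  set Y : ℕ → X :=
    fun k => ((πn (m k)).toFun (t (m k) - ((k:ℝ)+1)) (s (m k), x (m k))).2 with hYdef
  have key : ∀ k : ℕ,
      ENNReal.ofReal ((k:ℝ)+1) < π₀.ω (Y k) ∧
      (∀ r : ℝ, 0 ≤ r → r ≤ (k:ℝ)+1 → π₀.toFun r (Y k) ∈ closure U) ∧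
      dist (((πn (m k)).toFun (t (m k)) (s (m k), x (m k))).2)
        (π₀.toFun ((k:ℝ)+1) (Y k)) < min δ₀ (1/((k:ℝ)+1)) := by
    intro k
    obtain ⟨htk, hest⟩ := hg k (m k) (hm_ge k)
    set T : ℝ := (k:ℝ)+1 with hT
    have hT0 : 0 < T := by positivity
    set a : ℝ := t (m k) - T with ha
    have ha0 : 0 ≤ a := by rw [ha]; linarith
    have haT : a + T = t (m k) := by rw [ha]; ring
    have habω : ENNReal.ofReal (a + T) < (πn (m k)).ω (s (m k), x (m k)) := by
      rw [haT]; exact hω (m k)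
    have horb' : ∀ r : ℝ, 0 ≤ r → r ≤ a + T →
        (πn (m k)).toFun r (s (m k), x (m k)) ∈ (Set.univ : Set ℝ) ×ˢ B := by
      intro r h1 h2
      exact horb (m k) r h1 (by rw [haT] at h2; exact h2)
    have hA := lemA (πn (m k)) _ (hnoexp (m k)) (s (m k), x (m k)) a T ha0 hT0.le habω horb'
    set w := (πn (m k)).toFun a (s (m k), x (m k)) with hwdef
    have hYk : Y k = w.2 := rfl
    have hwB : w.2 ∈ B := (horb (m k) a ha0 (by linarith)).2
    have hwU : w.2 ∈ U := hBU hwB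
    have hwOrbB : ∀ r : ℝ, 0 ≤ r → r ≤ T → ((πn (m k)).toFun r w).2 ∈ B := by
      intro r h1 h2
      rw [(hA r h1 h2).2]
      exact (horb (m k) (a + r) (by linarith) (by linarith)).2
    have hUmem : ∀ τ : ℝ, 0 ≤ τ → τ ≤ T → ENNReal.ofReal τ < π₀.ω (Y k) →
        π₀.toFun τ (Y k) ∈ U := by
      intro τ h1 h2 h3
      rcases eq_or_lt_of_le h1 with h0 | h0
      · rw [← h0, π₀.map_zero, hYk]; exact hwU
      · have h5 : ENNReal.ofReal τ < (πn (m k)).ω w := (hA τ h1 h2).1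
        have h5' : ENNReal.ofReal τ < (πn (m k)).ω (w.1, w.2) := by
          rw [Prod.mk.eta]; exact h5
        rw [hYk] at h3 ⊢
        have hd := hest w.1 w.2 τ hwU h0 h2 h3 h5'
        rw [Prod.mk.eta] at hd
        by_contra hcon
        have hbb := hwOrbB τ h1 h2
        have hge := hdist _ hbb _ hcon
        have hmin : min δ₀ (1/T) ≤ δ₀ := min_le_left _ _
        linarith
    have hωY : ENNReal.ofReal T < π₀.ω (Y k) := by
      by_contra hcon
      push_neg at hcon
      have hall : ∀ τ : ℝ, 0 ≤ τ → ENNReal.ofReal τ < π₀.ω (Y k) →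
          π₀.toFun τ (Y k) ∈ closure U := by
        intro τ h1 h2
        have hτT : τ < T := (ENNReal.ofReal_lt_ofReal_iff hT0).mp (lt_of_lt_of_le h2 hcon)
        exact subset_closure (hUmem τ h1 hτT.le h2)
      have htop := hUadm.1 (Y k) hall
      rw [htop] at hcon
      exact ENNReal.ofReal_ne_top (top_le_iff.mp hcon)
    refine ⟨hωY, ?_, ?_⟩
    · intro r h1 h2
      exact subset_closure
        (hUmem r h1 h2 (lt_of_le_of_lt (ENNReal.ofReal_le_ofReal h2) hωY))
    · have h5 : ENNReal.ofReal T < (πn (m k)).ω w := (hA T hT0.le le_rfl).1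
      have h5' : ENNReal.ofReal T < (πn (m k)).ω (w.1, w.2) := by
        rw [Prod.mk.eta]; exact h5
      have hωY' : ENNReal.ofReal T < π₀.ω w.2 := by rw [← hYk]; exact hωY
      have hd := hest w.1 w.2 T hwU hT0 le_rfl hωY' h5'
      rw [Prod.mk.eta] at hd
      have hend : (πn (m k)).toFun T w = (πn (m k)).toFun (t (m k)) (s (m k), x (m k)) := by
        rw [(hA T hT0.le le_rfl).2, haT]
      rw [hend] at hd
      rw [hYk]
      exact hd
  obtain ⟨ψ, hψ, l, hl⟩ := hUadm.2 Y (fun k => (k:ℝ)+1)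
    (fun k => by positivity)
    (tendsto_atTop_add_const_right _ 1 tendsto_natCast_atTop_atTop)
    (fun k => (key k).1)
    (fun k r h1 h2 => (key k).2.1 r h1 h2)
  refine ⟨fun j => m (ψ j), hm_mono.comp hψ, l, ?_⟩
  rw [tendsto_iff_dist_tendsto_zero]
  have hbound : ∀ j : ℕ,
      dist (((πn (m (ψ j))).toFun (t (m (ψ j))) (s (m (ψ j)), x (m (ψ j)))).2) l
        ≤ 1/((j:ℝ)+1) + dist (π₀.toFun (((ψ j):ℝ)+1) (Y (ψ j))) l := by
    intro j
    have h1 := (key (ψ j)).2.2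
    have h2 : min δ₀ (1/(((ψ j):ℝ)+1)) ≤ 1/(((ψ j):ℝ)+1) := min_le_right _ _
    have h3 : 1/(((ψ j):ℝ)+1) ≤ 1/((j:ℝ)+1) := by
      apply one_div_le_one_div_of_le (by positivity)
      have hle : (j:ℝ) ≤ ((ψ j):ℝ) := Nat.cast_le.mpr hψ.le_apply
      linarith
    have htri := dist_triangle
      (((πn (m (ψ j))).toFun (t (m (ψ j))) (s (m (ψ j)), x (m (ψ j)))).2)
      (π₀.toFun (((ψ j):ℝ)+1) (Y (ψ j))) l
    linarith
  refine squeeze_zero (fun j => dist_nonneg) hbound ?_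
  have hz1 : Tendsto (fun j : ℕ => 1/((j:ℝ)+1)) atTop (nhds 0) :=
    tendsto_one_div_add_atTop_nhds_zero_nat
  have hz2 : Tendsto (fun j => dist (π₀.toFun (((ψ j):ℝ)+1) (Y (ψ j))) l) atTop (nhds 0) :=
    tendsto_iff_dist_tendsto_zero.mp hl
  simpa using hz1.add hz2
end
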